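/- arXiv:math/9402210 — 2 statements merged into one kernel-verified Lean document; each statement's English description precedes it below -/
import Mathlib

section
/- A sequence (f_k) in L¹(μ, E) converges in the Pettis norm to f₀ ∈ L¹(μ, E) if and only if: (1) (f_k) is Pettis uniformly integrable; (2) (f_k) satisfies the sequential Pettis Bocce criterion; and (3) ‖m_B(f_k) − m_B(f₀)‖ → 0 for each measurable B with μ(B) > 0. -/
open MeasureTheory Filter Topology
open scoped ENNReal

/-- The average value of `f` over `A`. -/
noncomputable def avg {Ω E : Type*} [MeasurableSpace Ω] [NormedAddCommGroup E]
    [NormedSpace ℝ E] (μ : Measure Ω) (f : Ω → E) (A : Set Ω) : E :=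
  (μ A).toReal⁻¹ • ∫ ω in A, f ω ∂μ

/-- The Bocce oscillation of `f` over `A`. -/
noncomputable def bocce {Ω E : Type*} [MeasurableSpace Ω] [NormedAddCommGroup E]
    [NormedSpace ℝ E] (μ : Measure Ω) (f : Ω → E) (A : Set Ω) : ℝ :=
  (∫ ω in A, ‖f ω - avg μ f A‖ ∂μ) / (μ A).toReal

/-- The Pettis (semi)norm on `L¹(μ, E)`. -/
noncomputable def pettisNorm {Ω E : Type*} [MeasurableSpace Ω] [NormedAddCommGroup E]
    [NormedSpace ℝ E] (μ : Measure Ω) (f : Ω → E) : ℝ :=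
  ⨆ x' : {x' : StrongDual ℝ E // ‖x'‖ ≤ 1}, ∫ ω, |x'.1 (f ω)| ∂μ

/-- The Pettis Bocce oscillation of `f` over `A`. -/
noncomputable def pettisBocce {Ω E : Type*} [MeasurableSpace Ω] [NormedAddCommGroup E]
    [NormedSpace ℝ E] (μ : Measure Ω) (f : Ω → E) (A : Set Ω) : ℝ :=
  ⨆ x' : {x' : StrongDual ℝ E // ‖x'‖ ≤ 1}, bocce μ (fun ω => x'.1 (f ω)) A

/-- The sequential Pettis Bocce criterion. -/
def SeqPettisBocceCriterion {Ω E : Type*} [MeasurableSpace Ω] [NormedAddCommGroup E]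
    [NormedSpace ℝ E] (μ : Measure Ω) (f : ℕ → Ω → E) : Prop :=
  ∀ k : ℕ → ℕ, StrictMono k → ∀ ε : ℝ, 0 < ε → ∀ B : Set Ω, MeasurableSet B → 0 < μ B →
    ∃ A ⊆ B, MeasurableSet A ∧ 0 < μ A ∧
      Filter.liminf (fun j => pettisBocce μ (f (k j)) A) Filter.atTop < ε

set_option linter.unusedSectionVars false

section Aux
variable {Ω E : Type*} [MeasurableSpace Ω] [NormedAddCommGroup E] [NormedSpace ℝ E]
  {μ : Measure Ω} {f f₀ : Ω → E} {A B S : Set Ω}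

instance : Nonempty {x' : StrongDual ℝ E // ‖x'‖ ≤ 1} := ⟨⟨0, by simp⟩⟩

lemma abs_dual_le (x' : {x' : StrongDual ℝ E // ‖x'‖ ≤ 1}) (v : E) : |x'.1 v| ≤ ‖v‖ := by
  calc |x'.1 v| = ‖x'.1 v‖ := (Real.norm_eq_abs _).symm
  _ ≤ ‖x'.1‖ * ‖v‖ := x'.1.le_opNorm v
  _ ≤ 1 * ‖v‖ := by gcongr; exact x'.2
  _ = ‖v‖ := one_mul _

lemma integrable_dual_comp (hf : Integrable f μ) (x' : StrongDual ℝ E) :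
    Integrable (fun ω => x' (f ω)) μ := x'.integrable_comp hf

lemma pettis_bddAbove (hf : Integrable f μ) :
    BddAbove (Set.range fun x' : {x' : StrongDual ℝ E // ‖x'‖ ≤ 1} =>
      ∫ ω, |x'.1 (f ω)| ∂μ) := by
  refine ⟨∫ ω, ‖f ω‖ ∂μ, ?_⟩
  rintro _ ⟨x', rfl⟩
  exact integral_mono ((integrable_dual_comp hf x'.1).abs) hf.norm fun ω => abs_dual_le x' (f ω)

lemma pettisNorm_le_bound {C : ℝ} (h : ∀ x' : {x' : StrongDual ℝ E // ‖x'‖ ≤ 1},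
    ∫ ω, |x'.1 (f ω)| ∂μ ≤ C) : pettisNorm μ f ≤ C := ciSup_le h

lemma le_pettisNorm (hf : Integrable f μ) (x' : {x' : StrongDual ℝ E // ‖x'‖ ≤ 1}) :
    ∫ ω, |x'.1 (f ω)| ∂μ ≤ pettisNorm μ f := le_ciSup (pettis_bddAbove hf) x'

lemma pettisNorm_nonneg : 0 ≤ pettisNorm μ f :=
  Real.iSup_nonneg fun _ => integral_nonneg fun _ => abs_nonneg _

lemma bocce_nonneg {h : Ω → E} : 0 ≤ bocce μ h A :=
  div_nonneg (integral_nonneg fun _ => norm_nonneg _) ENNReal.toReal_nonneg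

lemma pettisBocce_nonneg : 0 ≤ pettisBocce μ f A :=
  Real.iSup_nonneg fun _ => bocce_nonneg



lemma avg_dual_comp [CompleteSpace E] (hf : IntegrableOn f A μ) (x' : StrongDual ℝ E) :
    avg μ (fun ω => x' (f ω)) A = x' (avg μ f A) := by
  unfold avg
  rw [x'.integral_comp_comm hf, ContinuousLinearMap.map_smul]

lemma bocce_zero_of_null {h : Ω → E} (hA : μ A = 0) : bocce μ h A = 0 := by
  unfold bocce
  rw [Measure.restrict_eq_zero.2 hA, integral_zero_measure, zero_div]

lemma integral_zero_of_null (hA : μ A = 0) (h : Ω → E) : ∫ ω in A, h ω ∂μ = 0 := by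
  rw [Measure.restrict_eq_zero.2 hA, integral_zero_measure]

/-- basic bound : `bocce μ h A ≤ 2 (μ A)⁻¹ ∫_A ‖h‖`. -/
lemma bocce_le_two_inv_mul {h : Ω → ℝ} [IsFiniteMeasure μ] (hh : IntegrableOn h A μ) :
    bocce μ h A ≤ 2 * (μ A).toReal⁻¹ * ∫ ω in A, |h ω| ∂μ := by
  rcases eq_or_ne (μ A) 0 with hA | hA
  · rw [bocce_zero_of_null hA]
    positivity
  have hpos : 0 < (μ A).toReal := ENNReal.toReal_pos hA (measure_ne_top μ A)
  have habs : IntegrableOn (fun ω => |h ω|) A μ := hh.abs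
  have hI : ∫ ω in A, ‖h ω - avg μ h A‖ ∂μ ≤ ∫ ω in A, (|h ω| + |avg μ h A|) ∂μ := by
    refine integral_mono ((hh.sub (integrable_const _)).norm) (habs.add (integrable_const _))
      fun ω => ?_
    simpa [Real.norm_eq_abs] using abs_sub (h ω) (avg μ h A)
  have havg : |avg μ h A| ≤ (μ A).toReal⁻¹ * ∫ ω in A, |h ω| ∂μ := by
    unfold avg
    rw [smul_eq_mul, abs_mul, abs_of_nonneg (by positivity)]
    gcongr
    calc |∫ ω in A, h ω ∂μ| ≤ ∫ ω in A, |h ω| ∂μ := by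
          simpa [Real.norm_eq_abs] using norm_integral_le_integral_norm (μ := μ.restrict A) h
    _ ≤ _ := le_rfl
  have h2 : ∫ ω in A, (|h ω| + |avg μ h A|) ∂μ
      = (∫ ω in A, |h ω| ∂μ) + (μ A).toReal * |avg μ h A| := by
    rw [integral_add habs (integrable_const _)]
    simp [Measure.restrict_apply_univ, mul_comm, measureReal_def]
  have h3 : ∫ ω in A, ‖h ω - avg μ h A‖ ∂μ ≤ 2 * ∫ ω in A, |h ω| ∂μ := by
    refine hI.trans ?_
    rw [h2, two_mul]
    gcongr
    calc (μ A).toReal * |avg μ h A| ≤ (μ A).toReal * ((μ A).toReal⁻¹ * ∫ ω in A, |h ω| ∂μ) := by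
          gcongr
    _ = ∫ ω in A, |h ω| ∂μ := by field_simp
  unfold bocce
  rw [div_le_iff₀ hpos]
  refine h3.trans (le_of_eq ?_)
  field_simp





lemma pettisBocce_bddAbove [IsFiniteMeasure μ] (hf : IntegrableOn f A μ) :
    BddAbove (Set.range fun x' : {x' : StrongDual ℝ E // ‖x'‖ ≤ 1} =>
      bocce μ (fun ω => x'.1 (f ω)) A) := by
  refine ⟨2 * (μ A).toReal⁻¹ * ∫ ω in A, ‖f ω‖ ∂μ, ?_⟩
  rintro _ ⟨x', rfl⟩
  refine (bocce_le_two_inv_mul (integrable_dual_comp hf x'.1)).trans ?_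
  refine mul_le_mul_of_nonneg_left ?_ (by positivity)
  exact integral_mono (integrable_dual_comp hf x'.1).abs hf.norm fun ω => abs_dual_le x' (f ω)

lemma le_pettisBocce [IsFiniteMeasure μ] (hf : IntegrableOn f A μ)
    (x' : {x' : StrongDual ℝ E // ‖x'‖ ≤ 1}) :
    bocce μ (fun ω => x'.1 (f ω)) A ≤ pettisBocce μ f A :=
  le_ciSup (pettisBocce_bddAbove hf) x'

lemma pettisBocce_le_bound {C : ℝ} (h : ∀ x' : {x' : StrongDual ℝ E // ‖x'‖ ≤ 1},
    bocce μ (fun ω => x'.1 (f ω)) A ≤ C) : pettisBocce μ f A ≤ C := ciSup_le h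

lemma bocce_dual_le_of_nearConst [IsFiniteMeasure μ] (hA : MeasurableSet A)
    (hf : IntegrableOn f A μ) {c : E} {ε : ℝ} (hε : 0 ≤ ε)
    (hc : ∀ᵐ ω ∂μ, ω ∈ A → ‖f ω - c‖ ≤ ε) (x' : {x' : StrongDual ℝ E // ‖x'‖ ≤ 1}) :
    bocce μ (fun ω => x'.1 (f ω)) A ≤ 2 * ε := by
  rcases eq_or_ne (μ A) 0 with h0 | h0
  · rw [bocce_zero_of_null h0]; positivity
  have hpos : 0 < (μ A).toReal := ENNReal.toReal_pos h0 (measure_ne_top μ A)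
  set h : Ω → ℝ := fun ω => x'.1 (f ω) with hh
  set m : ℝ := avg μ h A with hm
  have hcr : ∀ᵐ ω ∂μ.restrict A, ‖f ω - c‖ ≤ ε := by
    rw [ae_restrict_iff' hA]; exact hc
  -- bound |x' c - m|
  have hint : IntegrableOn h A μ := integrable_dual_comp hf x'.1
  have hxc : |x'.1 c - m| ≤ ε := by
    have : x'.1 c - m = (μ A).toReal⁻¹ * ∫ ω in A, (x'.1 c - h ω) ∂μ := by
      rw [integral_sub (integrable_const _) hint, hm]
      unfold avg
      rw [smul_eq_mul, setIntegral_const, smul_eq_mul, measureReal_def, mul_sub]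
      rw [← mul_assoc, inv_mul_cancel₀ hpos.ne', one_mul]
    rw [this, abs_mul, abs_of_nonneg (by positivity)]
    have h1 : |∫ ω in A, (x'.1 c - h ω) ∂μ| ≤ ∫ ω in A, ε ∂μ := by
      have h2 : |∫ ω in A, (x'.1 c - h ω) ∂μ| ≤ ∫ ω in A, |x'.1 c - h ω| ∂μ := by
        simpa [Real.norm_eq_abs] using norm_integral_le_integral_norm (μ := μ.restrict A)
          (fun ω => x'.1 c - h ω)
      refine h2.trans (integral_mono_ae (((integrable_const (x'.1 c)).sub hint).abs)
        (integrable_const ε) ?_)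
      filter_upwards [hcr] with ω hω
      calc |x'.1 c - h ω| = |x'.1 (c - f ω)| := by rw [map_sub]
      _ ≤ ‖c - f ω‖ := abs_dual_le x' _
      _ = ‖f ω - c‖ := norm_sub_rev _ _
      _ ≤ ε := hω
    calc (μ A).toReal⁻¹ * |∫ ω in A, (x'.1 c - h ω) ∂μ| ≤ (μ A).toReal⁻¹ * ∫ ω in A, ε ∂μ := by
          gcongr
    _ = (μ A).toReal⁻¹ * ((μ A).toReal * ε) := by rw [setIntegral_const, smul_eq_mul, measureReal_def]
    _ = ε := by field_simp
  -- pointwise bound on A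
  have hpt : ∀ᵐ ω ∂μ.restrict A, ‖h ω - m‖ ≤ 2 * ε := by
    filter_upwards [hcr] with ω hω
    calc ‖h ω - m‖ = |h ω - m| := Real.norm_eq_abs _
    _ ≤ |h ω - x'.1 c| + |x'.1 c - m| := abs_sub_le _ _ _
    _ ≤ ε + ε := by
        refine add_le_add ?_ hxc
        calc |h ω - x'.1 c| = |x'.1 (f ω - c)| := by rw [map_sub]
        _ ≤ ‖f ω - c‖ := abs_dual_le x' _
        _ ≤ ε := hω
    _ = 2 * ε := by ring
  unfold bocce
  rw [div_le_iff₀ hpos]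
  calc ∫ ω in A, ‖h ω - avg μ h A‖ ∂μ ≤ ∫ ω in A, 2 * ε ∂μ := by
        refine integral_mono_ae (hint.sub (integrable_const _)).norm (integrable_const _) ?_
        exact hpt
  _ = (μ A).toReal * (2 * ε) := by rw [setIntegral_const, smul_eq_mul, measureReal_def]
  _ = 2 * ε * (μ A).toReal := by ring





/-- Key per-piece estimate. -/
lemma piece_bound [CompleteSpace E] [IsFiniteMeasure μ] (hA : MeasurableSet A)
    (hfm : Integrable f μ) (hf0 : Integrable f₀ μ) {c : E} {ε : ℝ} (hε : 0 ≤ ε)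
    (hc : ∀ᵐ ω ∂μ, ω ∈ A → ‖f₀ ω - c‖ ≤ ε) (hb : pettisBocce μ f A ≤ ε)
    (x' : {x' : StrongDual ℝ E // ‖x'‖ ≤ 1}) :
    ∫ ω in A, |x'.1 (f ω - f₀ ω)| ∂μ
      ≤ 3 * ε * (μ A).toReal + ‖(∫ ω in A, f ω ∂μ) - ∫ ω in A, f₀ ω ∂μ‖ := by
  rcases eq_or_ne (μ A) 0 with h0 | h0
  · rw [integral_zero_of_null h0]
    positivity
  have hpos : 0 < (μ A).toReal := ENNReal.toReal_pos h0 (measure_ne_top μ A)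
  set t := (μ A).toReal with ht
  set h₁ : Ω → ℝ := fun ω => x'.1 (f ω) with hh₁
  set h₂ : Ω → ℝ := fun ω => x'.1 (f₀ ω) with hh₂
  set m₁ : ℝ := avg μ h₁ A with hm₁
  set m₂ : ℝ := avg μ h₂ A with hm₂
  have hi₁ : IntegrableOn h₁ A μ := integrable_dual_comp hfm.integrableOn x'.1
  have hi₂ : IntegrableOn h₂ A μ := integrable_dual_comp hf0.integrableOn x'.1
  -- pointwise bound
  have hpt : ∀ ω, |x'.1 (f ω - f₀ ω)| ≤ |h₁ ω - m₁| + |h₂ ω - m₂| + |m₁ - m₂| := by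
    intro ω
    have : x'.1 (f ω - f₀ ω) = (h₁ ω - m₁) - (h₂ ω - m₂) + (m₁ - m₂) := by
      rw [map_sub]; ring
    rw [this]
    exact (abs_add_le _ _).trans (by gcongr; exact abs_sub _ _)
  have hint : ∫ ω in A, |x'.1 (f ω - f₀ ω)| ∂μ
      ≤ (∫ ω in A, |h₁ ω - m₁| ∂μ) + (∫ ω in A, |h₂ ω - m₂| ∂μ) + t * |m₁ - m₂| := by
    have e1 : IntegrableOn (fun ω => |h₁ ω - m₁| + |h₂ ω - m₂| + |m₁ - m₂|) A μ :=
      (((hi₁.sub (integrable_const _)).abs.add (hi₂.sub (integrable_const _)).abs).add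
        (integrable_const _))
    calc ∫ ω in A, |x'.1 (f ω - f₀ ω)| ∂μ
        ≤ ∫ ω in A, (|h₁ ω - m₁| + |h₂ ω - m₂| + |m₁ - m₂|) ∂μ :=
          integral_mono (integrable_dual_comp (hfm.sub hf0).integrableOn x'.1).abs e1 hpt
    _ = (∫ ω in A, |h₁ ω - m₁| ∂μ) + (∫ ω in A, |h₂ ω - m₂| ∂μ) + t * |m₁ - m₂| := by
        rw [integral_add (f := fun ω => |h₁ ω - m₁| + |h₂ ω - m₂|) (g := fun _ => |m₁ - m₂|)
            ((hi₁.sub (integrable_const _)).abs.add (hi₂.sub (integrable_const _)).abs)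
            (integrable_const _),
          integral_add (f := fun ω => |h₁ ω - m₁|) (g := fun ω => |h₂ ω - m₂|)
            (hi₁.sub (integrable_const _)).abs (hi₂.sub (integrable_const _)).abs,
          setIntegral_const, smul_eq_mul, measureReal_def]
  -- first term
  have hb₁ : ∫ ω in A, |h₁ ω - m₁| ∂μ ≤ t * ε := by
    have : ∫ ω in A, |h₁ ω - m₁| ∂μ = t * bocce μ h₁ A := by
      unfold bocce
      rw [← ht]
      field_simp
      simp [Real.norm_eq_abs, hm₁]
    rw [this]
    exact mul_le_mul_of_nonneg_left ((le_pettisBocce hfm.integrableOn x').trans hb) hpos.le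
  have hb₂ : ∫ ω in A, |h₂ ω - m₂| ∂μ ≤ t * (2 * ε) := by
    have : ∫ ω in A, |h₂ ω - m₂| ∂μ = t * bocce μ h₂ A := by
      unfold bocce
      rw [← ht]
      field_simp
      simp [Real.norm_eq_abs, hm₂]
    rw [this]
    exact mul_le_mul_of_nonneg_left (bocce_dual_le_of_nearConst hA hf0.integrableOn hε hc x')
      hpos.le
  -- mean difference
  have hb₃ : t * |m₁ - m₂| ≤ ‖(∫ ω in A, f ω ∂μ) - ∫ ω in A, f₀ ω ∂μ‖ := by
    have e1 : m₁ - m₂ = (μ A).toReal⁻¹ * x'.1 ((∫ ω in A, f ω ∂μ) - ∫ ω in A, f₀ ω ∂μ) := by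
      rw [hm₁, hm₂, hh₁, hh₂, avg_dual_comp hfm.integrableOn, avg_dual_comp hf0.integrableOn]
      rw [← map_sub]
      unfold avg
      rw [← smul_sub, ContinuousLinearMap.map_smul, smul_eq_mul]
    rw [e1, abs_mul, abs_of_nonneg (by positivity), ← mul_assoc, ← ht,
      mul_inv_cancel₀ hpos.ne', one_mul]
    exact (abs_dual_le x' _)
  calc ∫ ω in A, |x'.1 (f ω - f₀ ω)| ∂μ
      ≤ (∫ ω in A, |h₁ ω - m₁| ∂μ) + (∫ ω in A, |h₂ ω - m₂| ∂μ) + t * |m₁ - m₂| := hint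
  _ ≤ t * ε + t * (2 * ε) + ‖(∫ ω in A, f ω ∂μ) - ∫ ω in A, f₀ ω ∂μ‖ :=
      add_le_add (add_le_add hb₁ hb₂) hb₃
  _ = 3 * ε * t + ‖(∫ ω in A, f ω ∂μ) - ∫ ω in A, f₀ ω ∂μ‖ := by ring



/-- A positive-measure subset on which `f₀` is nearly constant. -/
lemma exists_nearConst (hf₀ : AEStronglyMeasurable f₀ μ) (hB : MeasurableSet B)
    (hBpos : 0 < μ B) {ε : ℝ} (hε : 0 < ε) :
    ∃ A, A ⊆ B ∧ MeasurableSet A ∧ 0 < μ A ∧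
      ∃ c : E, ∀ᵐ ω ∂μ, ω ∈ A → ‖f₀ ω - c‖ ≤ ε := by
  obtain ⟨g, hg, hfg⟩ := hf₀
  obtain ⟨T, hTc, hTd⟩ := hg.isSeparable_range
  have hcov : B ⊆ ⋃ t ∈ T, B ∩ {ω | ‖g ω - t‖ ≤ ε} := by
    intro ω hω
    have : g ω ∈ closure T := hTd ⟨ω, rfl⟩
    obtain ⟨t, htT, htd⟩ := Metric.mem_closure_iff.1 this ε hε
    refine Set.mem_biUnion htT ⟨hω, ?_⟩
    simp only [Set.mem_setOf_eq]
    rw [← dist_eq_norm]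
    exact htd.le
  have : ∃ t ∈ T, 0 < μ (B ∩ {ω | ‖g ω - t‖ ≤ ε}) := by
    by_contra hno
    push_neg at hno
    have hz : μ (⋃ t ∈ T, B ∩ {ω | ‖g ω - t‖ ≤ ε}) = 0 :=
      (measure_biUnion_null_iff hTc).2 fun t ht => le_antisymm (hno t ht) (by simp)
    exact absurd (measure_mono_null hcov hz) hBpos.ne'
  obtain ⟨t, _, htpos⟩ := this
  have hmeas : MeasurableSet {ω | ‖g ω - t‖ ≤ ε} :=
    ((hg.sub stronglyMeasurable_const).norm).measurable measurableSet_Iic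
  refine ⟨B ∩ {ω | ‖g ω - t‖ ≤ ε}, Set.inter_subset_left, hB.inter hmeas, htpos, t, ?_⟩
  filter_upwards [hfg] with ω hω hmem
  rw [hω]
  exact hmem.2

/-- Absolute continuity of the integral of the norm. -/
lemma exists_eta (hf₀ : Integrable f₀ μ) [IsProbabilityMeasure μ] {ε : ℝ} (hε : 0 < ε) :
    ∃ η > 0, ∀ S : Set Ω, (μ S).toReal ≤ η → ∫ ω in S, ‖f₀ ω‖ ∂μ ≤ ε := by
  set F : ℕ → Ω → ℝ := fun n ω => max (‖f₀ ω‖ - n) 0 with hF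
  have hFint : ∀ n, Integrable (F n) μ := by
    intro n
    exact (hf₀.norm.sub (integrable_const _)).pos_part
  have htend : Tendsto (fun n => ∫ ω, F n ω ∂μ) atTop (nhds 0) := by
    have h0 : (0:ℝ) = ∫ ω, (0:ℝ) ∂μ := by simp
    rw [h0]
    refine tendsto_integral_of_dominated_convergence (fun ω => ‖f₀ ω‖)
      (fun n => (hFint n).aestronglyMeasurable) hf₀.norm ?_ ?_
    · intro n
      filter_upwards with ω
      rw [Real.norm_eq_abs, abs_of_nonneg (le_max_right _ _)]
      simp only [hF, max_le_iff]
      constructor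
      · simp [sub_le_self_iff]
      · positivity
    · filter_upwards with ω
      have : ∀ᶠ n : ℕ in atTop, F n ω = 0 := by
        filter_upwards [eventually_ge_atTop ⌈‖f₀ ω‖⌉₊] with n hn
        simp only [hF, max_eq_right_iff, sub_nonpos]
        exact le_trans (Nat.le_ceil _) (by exact_mod_cast hn)
      exact Tendsto.congr' (by filter_upwards [this] with n hn; exact hn.symm) tendsto_const_nhds
  obtain ⟨n, hn⟩ := (htend.eventually (eventually_le_nhds (half_pos hε))).exists
  refine ⟨ε / (2 * (n + 1)), by positivity, fun S hS => ?_⟩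
  have key : ∀ ω, ‖f₀ ω‖ ≤ n + F n ω := by
    intro ω
    rcases le_or_gt (‖f₀ ω‖) n with h | h
    · have : 0 ≤ F n ω := le_max_right _ _
      linarith
    · have : F n ω = ‖f₀ ω‖ - n := max_eq_left (by linarith)
      linarith
  calc ∫ ω in S, ‖f₀ ω‖ ∂μ ≤ ∫ ω in S, (n + F n ω) ∂μ :=
        integral_mono hf₀.norm.integrableOn ((integrable_const _).add (hFint n).integrableOn) key
  _ = (μ S).toReal * n + ∫ ω in S, F n ω ∂μ := by
      rw [integral_add (integrable_const _) (hFint n).integrableOn, setIntegral_const, smul_eq_mul, measureReal_def]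
  _ ≤ (μ S).toReal * n + ∫ ω, F n ω ∂μ := by
      exact add_le_add le_rfl (setIntegral_le_integral (hFint n) (by filter_upwards with ω; exact le_max_right _ _))
  _ ≤ ε / (2 * (n + 1)) * n + ε / 2 := by
      gcongr
  _ ≤ ε / 2 + ε / 2 := by
      have h1 : ε / (2 * (n + 1)) * n ≤ ε / 2 := by
        rw [div_mul_eq_mul_div, div_le_div_iff₀ (by positivity) two_pos]
        nlinarith [hε.le]
      linarith
  _ = ε := by ring

/-- From `liminf < ε` and nonnegativity, extract a subsequence where all values are `< ε`. -/
lemma exists_subseq_of_liminf_lt {a : ℕ → ℝ} {C : ℝ} (hC : ∀ j, a j ≤ C) {ε : ℝ}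
    (h : liminf a atTop < ε) : ∃ φ : ℕ → ℕ, StrictMono φ ∧ ∀ j, a (φ j) < ε := by
  have hb : IsBoundedUnder (· ≤ ·) atTop a := ⟨C, by
    simp only [eventually_map]
    filter_upwards with j using hC j⟩
  have hfreq : ∃ᶠ j in atTop, a j < ε :=
    frequently_lt_of_liminf_lt hb.isCoboundedUnder_ge h
  exact extraction_of_frequently_atTop hfreq

/-- If `τ` is a strict mono subsequence whose range is contained in that of strict mono `σ`,
then `σ j ≤ τ j`. -/
lemma le_of_range_subset {σ τ : ℕ → ℕ} (hσ : StrictMono σ) (hτ : StrictMono τ)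
    (h : Set.range τ ⊆ Set.range σ) : ∀ j, σ j ≤ τ j := by
  intro j
  induction j with
  | zero =>
      obtain ⟨m, hm⟩ := h ⟨0, rfl⟩
      exact hm ▸ hσ.monotone (Nat.zero_le m)
  | succ j ih =>
      obtain ⟨m, hm⟩ := h ⟨j + 1, rfl⟩
      have h1 : σ j < τ (j + 1) := lt_of_le_of_lt ih (hτ (Nat.lt_succ_self j))
      have h2 : j < m := by
        by_contra hc
        push_neg at hc
        exact absurd (hm ▸ hσ.monotone hc : σ m ≤ σ j) (not_le.2 (hm ▸ h1 : σ j < σ m)).elim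
      rw [← hm]
      exact hσ.monotone h2

/-- Transfer of frequent smallness to a coarser subsequence. -/
lemma frequently_transfer {σ τ : ℕ → ℕ} (hσ : StrictMono σ) (hτ : StrictMono τ)
    (h : ∀ᶠ j in atTop, τ j ∈ Set.range σ) {P : ℕ → Prop}
    (hP : ∃ᶠ j in atTop, P (τ j)) : ∃ᶠ j in atTop, P (σ j) := by
  rw [frequently_atTop] at hP ⊢
  intro N
  obtain ⟨M, hM⟩ := eventually_atTop.1 h
  obtain ⟨j, hj, hPj⟩ := hP (max M (σ N))
  obtain ⟨m, hm⟩ := hM j (le_trans (le_max_left _ _) hj)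
  refine ⟨m, ?_, hm ▸ hPj⟩
  have h1 : σ N ≤ τ j := le_trans (le_trans (le_max_right _ _) hj) hτ.le_apply
  have h2 : σ N ≤ σ m := hm ▸ h1
  exact hσ.le_iff_le.1 h2




/-- Monotonicity of the tail integral in the cut-off level. -/
lemma cond1_mono {h : Ω → ℝ} (hh : Integrable h μ) {c c' : ℝ} (hcc : c ≤ c') :
    ∫ ω in {ω | c' ≤ |h ω|}, |h ω| ∂μ ≤ ∫ ω in {ω | c ≤ |h ω|}, |h ω| ∂μ := by
  refine setIntegral_mono_set hh.abs.integrableOn ?_ ?_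
  · filter_upwards with ω using abs_nonneg _
  · exact (Set.setOf_subset_setOf.2 fun ω hω => hcc.trans hω).eventuallyLE

/-- Tail control implies a bound on integrals over small sets. -/
lemma integral_abs_le_tail [IsFiniteMeasure μ] {h : Ω → ℝ} (hh : Integrable h μ) {c ε₁ : ℝ}
    (hc : 0 ≤ c) (hT : ∫ ω in {ω | c ≤ |h ω|}, |h ω| ∂μ ≤ ε₁) (S : Set Ω) :
    ∫ ω in S, |h ω| ∂μ ≤ c * (μ S).toReal + ε₁ := by
  obtain ⟨h', hmeas', hae⟩ := hh.1
  set T' : Set Ω := {ω | c ≤ |h' ω|} with hT'def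
  have hT'meas : MeasurableSet T' := hmeas'.measurable.abs measurableSet_Ici
  have hsetae : {ω | c ≤ |h ω|} =ᵐ[μ] T' := by
    filter_upwards [hae] with ω hω
    simp only [hT'def, Set.mem_setOf_eq, hω, eq_iff_iff]
    change c ≤ |h ω| ↔ c ≤ |h' ω|
    rw [hω]
  have hTT' : ∫ ω in T', |h ω| ∂μ ≤ ε₁ := by
    rw [← Measure.restrict_congr_set hsetae]
    exact hT
  set G : Ω → ℝ := T'.indicator fun ω => |h ω| with hGdef
  have hGint : Integrable G μ := hh.abs.indicator hT'meas
  have hGnn : 0 ≤ᵐ[μ] G := by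
    filter_upwards with ω
    exact Set.indicator_nonneg (fun _ _ => abs_nonneg _) ω
  have hptS : ∀ᵐ ω ∂μ.restrict S, |h ω| ≤ c + G ω := by
    have : ∀ᵐ ω ∂μ, |h ω| ≤ c + G ω := by
      filter_upwards [hae] with ω hω
      by_cases hmem : ω ∈ T'
      · rw [hGdef, Set.indicator_of_mem hmem]
        linarith [abs_nonneg (h ω)]
      · rw [hGdef, Set.indicator_of_notMem hmem]
        have : ¬ c ≤ |h' ω| := hmem
        rw [← hω] at this
        linarith [not_le.1 this]
    exact ae_restrict_of_ae this
  calc ∫ ω in S, |h ω| ∂μ ≤ ∫ ω in S, (c + G ω) ∂μ :=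
        integral_mono_ae hh.abs.integrableOn ((integrable_const _).add hGint.integrableOn) hptS
  _ = c * (μ S).toReal + ∫ ω in S, G ω ∂μ := by
      rw [integral_add (integrable_const _) hGint.integrableOn, setIntegral_const, smul_eq_mul, measureReal_def,
        mul_comm]
  _ ≤ c * (μ S).toReal + ∫ ω, G ω ∂μ := by
      exact add_le_add le_rfl (setIntegral_le_integral hGint hGnn)
  _ ≤ c * (μ S).toReal + ε₁ := by
      gcongr
      calc ∫ ω, G ω ∂μ = ∫ ω in T', |h ω| ∂μ := integral_indicator hT'meas
      _ ≤ ε₁ := hTT'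

/-- The norm of a set integral is bounded by the Pettis norm. -/
lemma norm_setIntegral_le_pettisNorm [CompleteSpace E] (hf : Integrable f μ) (S : Set Ω) :
    ‖∫ ω in S, f ω ∂μ‖ ≤ pettisNorm μ f := by
  obtain ⟨x', hx', hx'eq⟩ := exists_dual_vector'' ℝ (∫ ω in S, f ω ∂μ)
  have : ‖∫ ω in S, f ω ∂μ‖ = x' (∫ ω in S, f ω ∂μ) := by
    rw [hx'eq]
    simp
  rw [this]
  calc x' (∫ ω in S, f ω ∂μ) ≤ |x' (∫ ω in S, f ω ∂μ)| := le_abs_self _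
  _ = |∫ ω in S, x' (f ω) ∂μ| := by rw [x'.integral_comp_comm hf.integrableOn]
  _ ≤ ∫ ω in S, |x' (f ω)| ∂μ := by
      simpa [Real.norm_eq_abs] using
        norm_integral_le_integral_norm (μ := μ.restrict S) (fun ω => x' (f ω))
  _ ≤ ∫ ω, |x' (f ω)| ∂μ :=
      setIntegral_le_integral (integrable_dual_comp hf x').abs
        (by filter_upwards with ω using abs_nonneg _)
  _ ≤ pettisNorm μ f := le_ciSup (pettis_bddAbove hf) (⟨x', hx'⟩ :
      {x' : StrongDual ℝ E // ‖x'‖ ≤ 1})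

/-- Chebyshev. -/
lemma meas_tail_le {h : Ω → ℝ} (hh : Integrable h μ) {c : ℝ} (hc : 0 < c) :
    (μ {ω | c ≤ |h ω|}).toReal ≤ (∫ ω, |h ω| ∂μ) / c := by
  rw [le_div_iff₀ hc, mul_comm]
  exact mul_meas_ge_le_integral_of_nonneg (by filter_upwards with ω using abs_nonneg _) hh.abs c


/-- Averages are additive. -/
lemma avg_add {p q : Ω → ℝ} (hp : IntegrableOn p A μ) (hq : IntegrableOn q A μ) :
    avg μ (fun ω => p ω + q ω) A = avg μ p A + avg μ q A := by
  unfold avg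
  rw [integral_add hp hq, smul_add]

/-- bocce triangle-type inequality against a reference function. -/
lemma bocce_dual_triangle [IsFiniteMeasure μ] (hfm : Integrable f μ) (hf0 : Integrable f₀ μ)
    (x' : {x' : StrongDual ℝ E // ‖x'‖ ≤ 1}) :
    bocce μ (fun ω => x'.1 (f ω)) A ≤ bocce μ (fun ω => x'.1 (f₀ ω)) A
      + 2 * (μ A).toReal⁻¹ * ∫ ω, |x'.1 (f ω - f₀ ω)| ∂μ := by
  rcases eq_or_ne (μ A) 0 with h0 | h0
  · rw [bocce_zero_of_null h0]
    have h1 : 0 ≤ bocce μ (fun ω => x'.1 (f₀ ω)) A := bocce_nonneg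
    have h2 : (0:ℝ) ≤ 2 * (μ A).toReal⁻¹ * ∫ ω, |x'.1 (f ω - f₀ ω)| ∂μ := by
      have := integral_nonneg (μ := μ) (f := fun ω => |x'.1 (f ω - f₀ ω)|)
        (fun ω => abs_nonneg _)
      positivity
    linarith
  have hpos : 0 < (μ A).toReal := ENNReal.toReal_pos h0 (measure_ne_top μ A)
  set t := (μ A).toReal with ht
  set h₁ : Ω → ℝ := fun ω => x'.1 (f ω) with hh₁
  set h₂ : Ω → ℝ := fun ω => x'.1 (f₀ ω) with hh₂
  set d : Ω → ℝ := fun ω => x'.1 (f ω - f₀ ω) with hd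
  have hde : ∀ ω, d ω = h₁ ω - h₂ ω := fun ω => map_sub x'.1 (f ω) (f₀ ω)
  have hi₂ : IntegrableOn h₂ A μ := integrable_dual_comp (hf0.integrableOn) x'.1
  have hid : IntegrableOn d A μ := integrable_dual_comp ((hfm.sub hf0).integrableOn) x'.1
  have hidO : Integrable d μ := integrable_dual_comp (hfm.sub hf0) x'.1
  set m₂ := avg μ h₂ A with hm₂
  set md := avg μ d A with hmd
  have hfun : (fun ω => h₂ ω + d ω) = h₁ := by
    funext ω
    rw [hde]
    ring
  have hsum : avg μ h₁ A = m₂ + md := by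
    calc avg μ h₁ A = avg μ (fun ω => h₂ ω + d ω) A := by rw [hfun]
    _ = m₂ + md := avg_add hi₂ hid
  have hmdb : |md| ≤ t⁻¹ * ∫ ω in A, |d ω| ∂μ := by
    rw [hmd]
    unfold avg
    rw [smul_eq_mul, abs_mul, abs_of_nonneg (by positivity), ← ht]
    gcongr
    simpa [Real.norm_eq_abs] using norm_integral_le_integral_norm (μ := μ.restrict A) d
  have hkey : ∫ ω in A, |h₁ ω - avg μ h₁ A| ∂μ
      ≤ (∫ ω in A, |h₂ ω - m₂| ∂μ) + 2 * ∫ ω, |d ω| ∂μ := by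
    have hptw : ∀ ω, |h₁ ω - avg μ h₁ A| ≤ |h₂ ω - m₂| + (|d ω| + |md|) := by
      intro ω
      rw [hsum]
      have he : h₁ ω - (m₂ + md) = (h₂ ω - m₂) + (d ω - md) := by
        rw [hde ω] at *
        ring
      rw [he]
      refine (abs_add_le _ _).trans ?_
      gcongr
      exact abs_sub _ _
    have hi₁' : IntegrableOn (fun ω => |h₁ ω - avg μ h₁ A|) A μ :=
      ((integrable_dual_comp (hfm.integrableOn) x'.1).sub (integrable_const _)).abs
    calc ∫ ω in A, |h₁ ω - avg μ h₁ A| ∂μ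
        ≤ ∫ ω in A, (|h₂ ω - m₂| + (|d ω| + |md|)) ∂μ := by
          refine integral_mono hi₁' ?_ hptw
          exact (hi₂.sub (integrable_const _)).abs.add (hid.abs.add (integrable_const _))
    _ = (∫ ω in A, |h₂ ω - m₂| ∂μ) + ((∫ ω in A, |d ω| ∂μ) + t * |md|) := by
        rw [integral_add (f := fun ω => |h₂ ω - m₂|) (g := fun ω => |d ω| + |md|)
            (hi₂.sub (integrable_const _)).abs (hid.abs.add (integrable_const _)),
          integral_add (f := fun ω => |d ω|) (g := fun _ => |md|) hid.abs (integrable_const _),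
          setIntegral_const, smul_eq_mul, measureReal_def]
    _ ≤ (∫ ω in A, |h₂ ω - m₂| ∂μ) + ((∫ ω in A, |d ω| ∂μ) + t * (t⁻¹ * ∫ ω in A, |d ω| ∂μ)) := by
        gcongr
    _ = (∫ ω in A, |h₂ ω - m₂| ∂μ) + 2 * ∫ ω in A, |d ω| ∂μ := by
        rw [← mul_assoc, mul_inv_cancel₀ hpos.ne', one_mul]
        ring
    _ ≤ (∫ ω in A, |h₂ ω - m₂| ∂μ) + 2 * ∫ ω, |d ω| ∂μ := by
        exact add_le_add le_rfl (mul_le_mul_of_nonneg_left (setIntegral_le_integral hidO.abs (by filter_upwards with ω using abs_nonneg _)) (by norm_num))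
  unfold bocce
  simp only [Real.norm_eq_abs]
  rw [← ht]
  calc (∫ ω in A, |h₁ ω - avg μ h₁ A| ∂μ) / t
      ≤ ((∫ ω in A, |h₂ ω - m₂| ∂μ) + 2 * ∫ ω, |d ω| ∂μ) / t := by gcongr
  _ = (∫ ω in A, |h₂ ω - avg μ h₂ A| ∂μ) / t + 2 * t⁻¹ * ∫ ω, |d ω| ∂μ := by
      rw [← hm₂]
      field_simp

section Forward
variable [CompleteSpace E] [IsProbabilityMeasure μ] {F : ℕ → Ω → E}

lemma forward_means (hF : ∀ k, Integrable (F k) μ) (hf₀ : Integrable f₀ μ)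
    (htend : Tendsto (fun k => pettisNorm μ (fun ω => F k ω - f₀ ω)) atTop (nhds 0))
    (hB : MeasurableSet B) (hBpos : 0 < μ B) :
    Tendsto (fun k => ‖avg μ (F k) B - avg μ f₀ B‖) atTop (nhds 0) := by
  have hpos : (0:ℝ) ≤ (μ B).toReal⁻¹ := by positivity
  refine squeeze_zero (fun k => norm_nonneg _)
    (g := fun k => (μ B).toReal⁻¹ * pettisNorm μ (fun ω => F k ω - f₀ ω)) (fun k => ?_) ?_
  · have he : avg μ (F k) B - avg μ f₀ B = (μ B).toReal⁻¹ • ∫ ω in B, (F k ω - f₀ ω) ∂μ := by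
      unfold avg
      rw [integral_sub (hF k).integrableOn hf₀.integrableOn, smul_sub]
    rw [he, norm_smul, Real.norm_eq_abs, abs_of_nonneg hpos]
    exact mul_le_mul_of_nonneg_left
      (norm_setIntegral_le_pettisNorm ((hF k).sub hf₀) B) hpos
  · simpa using htend.const_mul ((μ B).toReal⁻¹)

lemma forward_criterion (hF : ∀ k, Integrable (F k) μ) (hf₀ : Integrable f₀ μ)
    (htend : Tendsto (fun k => pettisNorm μ (fun ω => F k ω - f₀ ω)) atTop (nhds 0)) :
    SeqPettisBocceCriterion μ F := by
  intro k hk ε hε B hB hBpos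
  obtain ⟨A, hAB, hAmeas, hApos, c, hc⟩ :=
    exists_nearConst hf₀.1 hB hBpos (by positivity : (0:ℝ) < ε/8)
  refine ⟨A, hAB, hAmeas, hApos, ?_⟩
  have hpos : 0 < (μ A).toReal := ENNReal.toReal_pos hApos.ne' (measure_ne_top μ A)
  have key : ∀ m, pettisBocce μ (F m) A
      ≤ ε/4 + 2 * (μ A).toReal⁻¹ * pettisNorm μ (fun ω => F m ω - f₀ ω) := by
    intro m
    refine pettisBocce_le_bound fun x' => ?_
    calc bocce μ (fun ω => x'.1 (F m ω)) A
        ≤ bocce μ (fun ω => x'.1 (f₀ ω)) A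
          + 2 * (μ A).toReal⁻¹ * ∫ ω, |x'.1 (F m ω - f₀ ω)| ∂μ :=
          bocce_dual_triangle (hF m) hf₀ x'
    _ ≤ 2*(ε/8) + 2 * (μ A).toReal⁻¹ * pettisNorm μ (fun ω => F m ω - f₀ ω) := by
        gcongr
        · exact bocce_dual_le_of_nearConst hAmeas hf₀.integrableOn (by positivity) hc x'
        · exact le_pettisNorm ((hF m).sub hf₀ : Integrable (fun ω => F m ω - f₀ ω) μ) x'
    _ = ε/4 + 2 * (μ A).toReal⁻¹ * pettisNorm μ (fun ω => F m ω - f₀ ω) := by ring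
  have hev : ∀ᶠ j in atTop, pettisBocce μ (F (k j)) A ≤ ε/2 := by
    have h1 : Tendsto (fun j => pettisNorm μ (fun ω => F (k j) ω - f₀ ω)) atTop (nhds 0) :=
      htend.comp hk.tendsto_atTop
    have hsmall : ∀ᶠ j in atTop,
        pettisNorm μ (fun ω => F (k j) ω - f₀ ω) ≤ (μ A).toReal * (ε/8) :=
      h1.eventually (eventually_le_nhds (by positivity))
    filter_upwards [hsmall] with j hj
    calc pettisBocce μ (F (k j)) A
        ≤ ε/4 + 2 * (μ A).toReal⁻¹ * pettisNorm μ (fun ω => F (k j) ω - f₀ ω) := key _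
    _ ≤ ε/4 + 2 * (μ A).toReal⁻¹ * ((μ A).toReal * (ε/8)) := by gcongr
    _ = ε/4 + 2 * ((μ A).toReal⁻¹ * (μ A).toReal) * (ε/8) := by ring
    _ = ε/2 := by rw [inv_mul_cancel₀ hpos.ne']; ring
  have hbd : IsBoundedUnder (· ≥ ·) atTop (fun j => pettisBocce μ (F (k j)) A) := ⟨0, by
    simp only [eventually_map]
    filter_upwards with j using pettisBocce_nonneg⟩
  exact lt_of_le_of_lt (liminf_le_of_frequently_le hev.frequently hbd) (by linarith)

lemma forward_uniform (hF : ∀ k, Integrable (F k) μ) (hf₀ : Integrable f₀ μ)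
    (htend : Tendsto (fun k => pettisNorm μ (fun ω => F k ω - f₀ ω)) atTop (nhds 0))
    {ε : ℝ} (hε : 0 < ε) :
    ∃ c : ℝ, ∀ k, ∀ x' : StrongDual ℝ E, ‖x'‖ ≤ 1 →
      ∫ ω in {ω | c ≤ |x' (F k ω)|}, |x' (F k ω)| ∂μ ≤ ε := by
  obtain ⟨η₀, hη₀pos, hη₀⟩ := exists_eta hf₀ (half_pos hε)
  obtain ⟨K, hK⟩ := eventually_atTop.1 (htend.eventually (eventually_le_nhds (half_pos hε)))
  have hηk : ∀ m : ℕ, ∃ η, 0 < η ∧ ∀ S : Set Ω, (μ S).toReal ≤ η →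
      ∫ ω in S, ‖F m ω‖ ∂μ ≤ ε := by
    intro m
    obtain ⟨η, hη1, hη2⟩ := exists_eta (hF m) hε
    exact ⟨η, hη1, hη2⟩
  choose ηk hηkpos hηkprop using hηk
  have hne : (Finset.range (K+1)).Nonempty := ⟨K, Finset.self_mem_range_succ K⟩
  set η := min η₀ ((Finset.range (K+1)).inf' hne ηk) with hηdef
  have hηpos : 0 < η := lt_min hη₀pos (by
    rw [Finset.lt_inf'_iff]
    intro i _
    exact hηkpos i)
  set Mb := max (ε/2 + ∫ ω, ‖f₀ ω‖ ∂μ)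
    ((Finset.range (K+1)).sup' hne (fun m => ∫ ω, ‖F m ω‖ ∂μ)) with hMbdef
  have hMbpos : 0 < Mb := lt_max_iff.2 (Or.inl
    (add_pos_of_pos_of_nonneg (half_pos hε) (integral_nonneg fun ω => norm_nonneg _)))
  set c := Mb / η + 1 with hcdef
  have hcpos : 0 < c := by positivity
  refine ⟨c, fun m x' hx' => ?_⟩
  set x : {y : StrongDual ℝ E // ‖y‖ ≤ 1} := ⟨x', hx'⟩ with hxdef
  have hint : Integrable (fun ω => x' (F m ω)) μ := integrable_dual_comp (hF m) x'
  have hgint : Integrable (fun ω => F m ω - f₀ ω) μ := (hF m).sub hf₀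
  have hIb : ∫ ω, |x' (F m ω)| ∂μ ≤ Mb := by
    rcases lt_or_ge m K with hm | hm
    · refine le_trans (integral_mono hint.abs (hF m).norm fun ω => abs_dual_le x (F m ω)) ?_
      exact le_max_of_le_right (Finset.le_sup' (fun m => ∫ ω, ‖F m ω‖ ∂μ)
        (Finset.mem_range.2 (Nat.lt_succ_of_lt hm)))
    · have h1 : ∫ ω, |x' (F m ω)| ∂μ
          ≤ (∫ ω, |x' (F m ω - f₀ ω)| ∂μ) + ∫ ω, |x' (f₀ ω)| ∂μ := by
        rw [← integral_add (integrable_dual_comp hgint x').abs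
          (integrable_dual_comp hf₀ x').abs]
        refine integral_mono hint.abs ((integrable_dual_comp hgint x').abs.add
          (integrable_dual_comp hf₀ x').abs) fun ω => ?_
        have he : x' (F m ω) = x' (F m ω - f₀ ω) + x' (f₀ ω) := by
          rw [map_sub]
          ring
        rw [he]
        exact abs_add_le _ _
      refine h1.trans ?_
      have h2 : ∫ ω, |x' (F m ω - f₀ ω)| ∂μ ≤ pettisNorm μ (fun ω => F m ω - f₀ ω) :=
        le_pettisNorm hgint x
      have h3 : ∫ ω, |x' (f₀ ω)| ∂μ ≤ ∫ ω, ‖f₀ ω‖ ∂μ :=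
        integral_mono (integrable_dual_comp hf₀ x').abs hf₀.norm fun ω => abs_dual_le x (f₀ ω)
      refine le_max_of_le_left ?_
      have h4 := hK m hm
      linarith
  have hTm : (μ {ω | c ≤ |x' (F m ω)|}).toReal ≤ η := by
    refine (meas_tail_le hint hcpos).trans ?_
    calc (∫ ω, |x' (F m ω)| ∂μ) / c ≤ Mb / c := by gcongr
    _ ≤ η := by
        rw [div_le_iff₀ hcpos, hcdef]
        have he : η * (Mb / η + 1) = Mb + η := by
          field_simp
        rw [he]
        linarith
  rcases lt_or_ge m K with hm | hm
  · refine le_trans (integral_mono hint.abs.integrableOn (hF m).norm.integrableOn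
      fun ω => abs_dual_le x (F m ω)) ?_
    refine hηkprop m _ (hTm.trans ?_)
    exact le_trans (min_le_right _ _) (Finset.inf'_le _ (Finset.mem_range.2 (Nat.lt_succ_of_lt hm)))
  · set T := {ω | c ≤ |x' (F m ω)|} with hTdef
    have hsplit : ∫ ω in T, |x' (F m ω)| ∂μ
        ≤ (∫ ω in T, |x' (F m ω - f₀ ω)| ∂μ) + ∫ ω in T, |x' (f₀ ω)| ∂μ := by
      rw [← integral_add (integrable_dual_comp hgint x').abs.integrableOn
        (integrable_dual_comp hf₀ x').abs.integrableOn]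
      refine integral_mono hint.abs.integrableOn
        ((integrable_dual_comp hgint x').abs.integrableOn.add
          (integrable_dual_comp hf₀ x').abs.integrableOn) fun ω => ?_
      have he : x' (F m ω) = x' (F m ω - f₀ ω) + x' (f₀ ω) := by
        rw [map_sub]
        ring
      rw [he]
      exact abs_add_le _ _
    have t1 : ∫ ω in T, |x' (F m ω - f₀ ω)| ∂μ ≤ pettisNorm μ (fun ω => F m ω - f₀ ω) := by
      refine le_trans (setIntegral_le_integral (integrable_dual_comp hgint x').abs
        (by filter_upwards with ω using abs_nonneg _)) ?_
      exact le_pettisNorm hgint x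
    have t2 : ∫ ω in T, |x' (f₀ ω)| ∂μ ≤ ∫ ω in T, ‖f₀ ω‖ ∂μ :=
      integral_mono (integrable_dual_comp hf₀ x').abs.integrableOn hf₀.norm.integrableOn
        fun ω => abs_dual_le x (f₀ ω)
    have t3 : ∫ ω in T, ‖f₀ ω‖ ∂μ ≤ ε/2 := hη₀ T (hTm.trans (min_le_left _ _))
    have t4 := hK m hm
    linarith

end Forward

section Reverse
variable [CompleteSpace E] [IsProbabilityMeasure μ] {F : ℕ → Ω → E}

lemma pettisBocce_zero_of_null (hA : μ A = 0) : pettisBocce μ f A = 0 := by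
  unfold pettisBocce
  have : ∀ x' : {x' : StrongDual ℝ E // ‖x'‖ ≤ 1},
      bocce μ (fun ω => x'.1 (f ω)) A = 0 := fun x' => bocce_zero_of_null hA
  simp only [this, ciSup_const]

lemma tail_control (hF : ∀ k, Integrable (F k) μ)
    (hcond : ∀ ε : ℝ, 0 < ε → ∃ c : ℝ, ∀ k, ∀ x' : StrongDual ℝ E, ‖x'‖ ≤ 1 →
      ∫ ω in {ω | c ≤ |x' (F k ω)|}, |x' (F k ω)| ∂μ ≤ ε) {ε₁ : ℝ} (hε₁ : 0 < ε₁) :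
    ∃ c : ℝ, 0 ≤ c ∧ ∀ k, ∀ x' : StrongDual ℝ E, ‖x'‖ ≤ 1 → ∀ S : Set Ω,
      ∫ ω in S, |x' (F k ω)| ∂μ ≤ c * (μ S).toReal + ε₁ := by
  obtain ⟨c, hc⟩ := hcond ε₁ hε₁
  refine ⟨max c 0, le_max_right _ _, fun k x' hx' S => ?_⟩
  have h1 : ∫ ω in {ω | max c 0 ≤ |x' (F k ω)|}, |x' (F k ω)| ∂μ ≤ ε₁ :=
    (cond1_mono (integrable_dual_comp (hF k) x') (le_max_left _ _)).trans (hc k x' hx')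
  exact integral_abs_le_tail (integrable_dual_comp (hF k) x') (le_max_right _ _) h1 S

lemma pettisBocce_unif (hF : ∀ k, Integrable (F k) μ) {c ε₁ : ℝ} (hc : 0 ≤ c) (hε₁ : 0 ≤ ε₁)
    (hcc : ∀ k, ∀ x' : StrongDual ℝ E, ‖x'‖ ≤ 1 → ∀ S : Set Ω,
      ∫ ω in S, |x' (F k ω)| ∂μ ≤ c * (μ S).toReal + ε₁) (A : Set Ω) (k : ℕ) :
    pettisBocce μ (F k) A ≤ 2 * (μ A).toReal⁻¹ * (c + ε₁) := by
  refine pettisBocce_le_bound fun x' => ?_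
  refine (bocce_le_two_inv_mul (integrable_dual_comp (hF k).integrableOn x'.1)).trans ?_
  have h1 : ∫ ω in A, |x'.1 (F k ω)| ∂μ ≤ c + ε₁ := by
    refine (hcc k x'.1 x'.2 A).trans ?_
    have h2 : (μ A).toReal ≤ 1 := by
      have hh := prob_le_one (μ := μ) (s := A)
      calc (μ A).toReal ≤ (1 : ℝ≥0∞).toReal := ENNReal.toReal_mono (by norm_num) hh
      _ = 1 := by norm_num
    have h3 := mul_le_of_le_one_right hc h2
    linarith
  have hinv : (0:ℝ) ≤ (μ A).toReal⁻¹ := by positivity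
  calc 2 * (μ A).toReal⁻¹ * ∫ ω in A, |x'.1 (F k ω)| ∂μ
      ≤ 2 * (μ A).toReal⁻¹ * (c + ε₁) := by
        have hnn : (0:ℝ) ≤ 2 * (μ A).toReal⁻¹ := by positivity
        exact mul_le_mul_of_nonneg_left h1 hnn

/-- One step of the exhaustion construction. -/
lemma step_lemma (hF : ∀ k, Integrable (F k) μ) (hf₀ : Integrable f₀ μ)
    (hcrit : SeqPettisBocceCriterion μ F)
    {Cb : ℝ} (hPB : ∀ (A : Set Ω) (kk : ℕ), pettisBocce μ (F kk) A ≤ 2 * (μ A).toReal⁻¹ * Cb)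
    {ε' : ℝ} (hε' : 0 < ε') (σ : ℕ → ℕ) (U : Set Ω) (hσ : StrictMono σ)
    (hU : MeasurableSet U) :
    ∃ p : (ℕ → ℕ) × Set Ω, StrictMono p.1 ∧ MeasurableSet p.2 ∧
      (∀ j, p.1 j ∈ Set.range σ) ∧ U ⊆ p.2 ∧
      (∃ c : E, ∀ᵐ ω ∂μ, ω ∈ p.2 \ U → ‖f₀ ω - c‖ ≤ ε') ∧
      (∀ j, pettisBocce μ (F (p.1 j)) (p.2 \ U) < ε') ∧
      (∀ A₂ : Set Ω, A₂ ⊆ Uᶜ → MeasurableSet A₂ →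
        (∃ c : E, ∀ᵐ ω ∂μ, ω ∈ A₂ → ‖f₀ ω - c‖ ≤ ε') →
        (∃ᶠ j in atTop, pettisBocce μ (F (σ j)) A₂ < ε') → μ A₂ ≤ 2 * μ (p.2 \ U)) := by
  rcases eq_or_ne (μ Uᶜ) 0 with hc0 | hc0
  · -- degenerate: stay put
    refine ⟨(σ, U), hσ, hU, fun j => ⟨j, rfl⟩, le_refl U, ⟨0, ?_⟩, fun j => ?_, fun A₂ hA₂ _ _ _ => ?_⟩
    · filter_upwards with ω hω
      simp at hω
    · rw [Set.diff_self, pettisBocce_zero_of_null (by simp)]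
      exact hε'
    · have : μ A₂ = 0 := measure_mono_null hA₂ hc0
      simp [this]
  · -- main branch
    have hUcpos : 0 < μ Uᶜ := pos_iff_ne_zero.2 hc0
    -- the collection of candidate measures
    set Cand : Set Ω → Prop := fun A₂ => A₂ ⊆ Uᶜ ∧ MeasurableSet A₂ ∧
      (∃ c : E, ∀ᵐ ω ∂μ, ω ∈ A₂ → ‖f₀ ω - c‖ ≤ ε') ∧
      (∃ᶠ j in atTop, pettisBocce μ (F (σ j)) A₂ < ε') with hCand
    set S : Set ℝ≥0∞ := {m | ∃ A₂, Cand A₂ ∧ μ A₂ = m} with hS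
    -- S is nonempty with a positive element
    obtain ⟨B', hB'sub, hB'meas, hB'pos, cB, hcB⟩ :=
      exists_nearConst hf₀.1 hU.compl hUcpos hε'
    obtain ⟨A₀, hA₀B, hA₀meas, hA₀pos, hlim⟩ := hcrit σ hσ ε' hε' B' hB'meas hB'pos
    have hfreq₀ : ∃ᶠ j in atTop, pettisBocce μ (F (σ j)) A₀ < ε' := by
      have hbdd : IsBoundedUnder (· ≤ ·) atTop (fun j => pettisBocce μ (F (σ j)) A₀) :=
        ⟨2 * (μ A₀).toReal⁻¹ * Cb, by
          simp only [eventually_map]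
          filter_upwards with j using hPB A₀ (σ j)⟩
      exact frequently_lt_of_liminf_lt hbdd.isCoboundedUnder_ge hlim
    have hA₀cand : Cand A₀ := by
      refine ⟨hA₀B.trans hB'sub, hA₀meas, ⟨cB, ?_⟩, hfreq₀⟩
      · filter_upwards [hcB] with ω hω hmem
        exact hω (hA₀B hmem)
    have hA₀S : μ A₀ ∈ S := ⟨A₀, hA₀cand, rfl⟩
    set s := sSup S with hsdef
    have hspos : 0 < s := lt_of_lt_of_le hA₀pos (le_sSup hA₀S)
    have hsle : s ≤ 1 := by
      refine sSup_le fun m hm => ?_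
      obtain ⟨A₂, _, hA₂m⟩ := hm
      rw [← hA₂m]
      exact prob_le_one
    have hsne : s ≠ ⊤ := (lt_of_le_of_lt hsle (by norm_num)).ne
    have hhalf : s / 2 < s := ENNReal.half_lt_self hspos.ne' hsne
    obtain ⟨m, hmS, hmgt⟩ := lt_sSup_iff.1 hhalf
    obtain ⟨A₂, hA₂cand, hA₂m⟩ := hmS
    obtain ⟨φ, hφmono, hφ⟩ := extraction_of_frequently_atTop hA₂cand.2.2.2
    refine ⟨(σ ∘ φ, U ∪ A₂), hσ.comp hφmono, hU.union hA₂cand.2.1,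
      fun j => ⟨φ j, rfl⟩, Set.subset_union_left, ?_, ?_, ?_⟩
    · obtain ⟨c, hcc⟩ := hA₂cand.2.2.1
      refine ⟨c, ?_⟩
      filter_upwards [hcc] with ω hω hmem
      exact hω (((Set.union_diff_left (s := U) (t := A₂)) ▸ hmem).1)
    · intro j
      have heq : (U ∪ A₂) \ U = A₂ := by
        ext ω
        constructor
        · rintro ⟨h1 | h1, h2⟩
          · exact absurd h1 h2
          · exact h1
        · intro h
          exact ⟨Or.inr h, fun hU' => (hA₂cand.1 h) hU'⟩
      rw [heq]
      exact hφ j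
    · intro A₃ hA₃sub hA₃meas hA₃near hA₃freq
      have heq : (U ∪ A₂) \ U = A₂ := by
        ext ω
        constructor
        · rintro ⟨h1 | h1, h2⟩
          · exact absurd h1 h2
          · exact h1
        · intro h
          exact ⟨Or.inr h, fun hU' => (hA₂cand.1 h) hU'⟩
      rw [heq]
      have h1 : μ A₃ ≤ s := le_sSup ⟨A₃, ⟨hA₃sub, hA₃meas, hA₃near, hA₃freq⟩, rfl⟩
      have h2 : s ≤ 2 * μ A₂ := by
        calc s = s / 2 + s / 2 := (ENNReal.add_halves s).symm
        _ ≤ μ A₂ + μ A₂ := by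
            rw [← hA₂m] at hmgt
            exact add_le_add hmgt.le hmgt.le
        _ = 2 * μ A₂ := (two_mul _).symm
      exact h1.trans h2

lemma reverse_dir (hF : ∀ k, Integrable (F k) μ) (hf₀ : Integrable f₀ μ)
    (h1 : ∀ ε : ℝ, 0 < ε → ∃ c : ℝ, ∀ k, ∀ x' : StrongDual ℝ E, ‖x'‖ ≤ 1 →
      ∫ ω in {ω | c ≤ |x' (F k ω)|}, |x' (F k ω)| ∂μ ≤ ε)
    (h2 : SeqPettisBocceCriterion μ F)
    (h3 : ∀ B : Set Ω, MeasurableSet B → 0 < μ B →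
      Tendsto (fun k => ‖avg μ (F k) B - avg μ f₀ B‖) atTop (nhds 0)) :
    Tendsto (fun k => pettisNorm μ (fun ω => F k ω - f₀ ω)) atTop (nhds 0) := by
  by_contra hnot
  rw [Metric.tendsto_atTop] at hnot
  push_neg at hnot
  obtain ⟨δ, hδpos, hδ⟩ := hnot
  obtain ⟨k₀, hk₀mono, hk₀⟩ := extraction_of_frequently_atTop (frequently_atTop.2 hδ)
  have hk₀' : ∀ j, δ ≤ pettisNorm μ (fun ω => F (k₀ j) ω - f₀ ω) := by
    intro j
    have hh := hk₀ j
    rwa [Real.dist_eq, sub_zero, abs_of_nonneg pettisNorm_nonneg] at hh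
  have hε'pos : (0:ℝ) < δ/24 := by positivity
  have hd8 : (0:ℝ) < δ/8 := by positivity
  obtain ⟨c, hcnn, hcc⟩ := tail_control hF h1 hd8
  have hPB : ∀ (A : Set Ω) (kk : ℕ),
      pettisBocce μ (F kk) A ≤ 2 * (μ A).toReal⁻¹ * (c + δ/8) :=
    pettisBocce_unif hF hcnn hd8.le hcc
  obtain ⟨η₀, hη₀pos, hη₀⟩ := exists_eta hf₀ hd8
  set η := min η₀ (δ/(8*(c+1))) with hηdef
  have hηpos : 0 < η := lt_min hη₀pos (by positivity)
  -- the recursive construction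
  have hstep : ∀ q : (ℕ → ℕ) × Set Ω, StrictMono q.1 → MeasurableSet q.2 →
      ∃ p : (ℕ → ℕ) × Set Ω, StrictMono p.1 ∧ MeasurableSet p.2 ∧
      (∀ j, p.1 j ∈ Set.range q.1) ∧ q.2 ⊆ p.2 ∧
      (∃ cst : E, ∀ᵐ ω ∂μ, ω ∈ p.2 \ q.2 → ‖f₀ ω - cst‖ ≤ δ/24) ∧
      (∀ j, pettisBocce μ (F (p.1 j)) (p.2 \ q.2) < δ/24) ∧
      (∀ A₂ : Set Ω, A₂ ⊆ q.2ᶜ → MeasurableSet A₂ →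
        (∃ cst : E, ∀ᵐ ω ∂μ, ω ∈ A₂ → ‖f₀ ω - cst‖ ≤ δ/24) →
        (∃ᶠ j in atTop, pettisBocce μ (F (q.1 j)) A₂ < δ/24) → μ A₂ ≤ 2 * μ (p.2 \ q.2)) :=
    fun q hq1 hq2 => step_lemma hF hf₀ h2 hPB hε'pos q.1 q.2 hq1 hq2
  let T : Type _ := {q : (ℕ → ℕ) × Set Ω // StrictMono q.1 ∧ MeasurableSet q.2}
  let stepT : T → T := fun q =>
    ⟨Classical.choose (hstep q.1 q.2.1 q.2.2),
      (Classical.choose_spec (hstep q.1 q.2.1 q.2.2)).1,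
      (Classical.choose_spec (hstep q.1 q.2.1 q.2.2)).2.1⟩
  let StT : ℕ → T := fun n => Nat.rec ⟨(k₀, (∅ : Set Ω)), hk₀mono, MeasurableSet.empty⟩
    (fun _ q => stepT q) n
  set σn : ℕ → ℕ → ℕ := fun n => (StT n).1.1 with hσndef
  set Un : ℕ → Set Ω := fun n => (StT n).1.2 with hUndef
  have hσmono : ∀ n, StrictMono (σn n) := fun n => (StT n).2.1
  have hUmeas : ∀ n, MeasurableSet (Un n) := fun n => (StT n).2.2
  have hspec : ∀ n, (∀ j, σn (n+1) j ∈ Set.range (σn n)) ∧ Un n ⊆ Un (n+1) ∧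
      (∃ cst : E, ∀ᵐ ω ∂μ, ω ∈ Un (n+1) \ Un n → ‖f₀ ω - cst‖ ≤ δ/24) ∧
      (∀ j, pettisBocce μ (F (σn (n+1) j)) (Un (n+1) \ Un n) < δ/24) ∧
      (∀ A₂ : Set Ω, A₂ ⊆ (Un n)ᶜ → MeasurableSet A₂ →
        (∃ cst : E, ∀ᵐ ω ∂μ, ω ∈ A₂ → ‖f₀ ω - cst‖ ≤ δ/24) →
        (∃ᶠ j in atTop, pettisBocce μ (F (σn n j)) A₂ < δ/24) →
          μ A₂ ≤ 2 * μ (Un (n+1) \ Un n)) := by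
    intro n
    have hs := Classical.choose_spec (hstep (StT n).1 (StT n).2.1 (StT n).2.2)
    exact ⟨hs.2.2.1, hs.2.2.2.1, hs.2.2.2.2.1, hs.2.2.2.2.2.1, hs.2.2.2.2.2.2⟩
  have hrange1 : ∀ n, Set.range (σn (n+1)) ⊆ Set.range (σn n) := by
    intro n x hx
    obtain ⟨j, rfl⟩ := hx
    exact (hspec n).1 j
  have hrange : ∀ n m, n ≤ m → Set.range (σn m) ⊆ Set.range (σn n) := by
    intro n m hnm
    induction m, hnm using Nat.le_induction with
    | base => exact subset_rfl
    | succ m hm ih => exact (hrange1 m).trans ih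
  have hUsub : ∀ n, Un n ⊆ Un (n+1) := fun n => (hspec n).2.1
  have hUmono : Monotone Un := monotone_nat_of_le_succ hUsub
  set An : ℕ → Set Ω := fun n => Un (n+1) \ Un n with hAndef
  have hAnmeas : ∀ n, MeasurableSet (An n) := fun n => (hUmeas (n+1)).diff (hUmeas n)
  have hUnion : ∀ n, Un n ∪ An n = Un (n+1) := fun n => Set.union_diff_cancel (hUsub n)
  have hdisj : ∀ n, Disjoint (Un n) (An n) := fun n => disjoint_sdiff_self_right
  have hmeasadd : ∀ n, μ (Un (n+1)) = μ (Un n) + μ (An n) := fun n => by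
    rw [← hUnion n]
    exact measure_union (hdisj n) (hAnmeas n)
  -- the union has full measure
  have hnull : μ ((⋃ n, Un n)ᶜ) = 0 := by
    by_contra hpos0
    have hpos : 0 < μ ((⋃ n, Un n)ᶜ) := pos_iff_ne_zero.2 hpos0
    have hle : ∀ n m, n ≤ m → ∀ j, σn n j ≤ σn m j := fun n m hnm =>
      le_of_range_subset (hσmono n) (hσmono m) (hrange n m hnm)
    set σi : ℕ → ℕ := fun n => σn (n+1) n with hσidef
    have hσimono : StrictMono σi := strictMono_nat_of_lt_succ (fun n => by
      calc σi n = σn (n+1) n := rfl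
      _ ≤ σn (n+2) n := hle (n+1) (n+2) (by omega) n
      _ < σn (n+2) (n+1) := (hσmono (n+2)) (Nat.lt_succ_self n))
    have hmeasU : MeasurableSet ((⋃ n, Un n)ᶜ) := (MeasurableSet.iUnion hUmeas).compl
    obtain ⟨B', hB'sub, hB'meas, hB'pos, cB, hcB⟩ :=
      exists_nearConst hf₀.1 hmeasU hpos hε'pos
    obtain ⟨A, hAB, hAmeas, hApos, hlim⟩ := h2 σi hσimono (δ/24) hε'pos B' hB'meas hB'pos
    have hfreqi : ∃ᶠ j in atTop, pettisBocce μ (F (σi j)) A < δ/24 := by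
      have hbdd : IsBoundedUnder (· ≤ ·) atTop (fun j => pettisBocce μ (F (σi j)) A) :=
        ⟨2*(μ A).toReal⁻¹*(c+δ/8), by
          simp only [eventually_map]
          filter_upwards with j using hPB A (σi j)⟩
      exact frequently_lt_of_liminf_lt hbdd.isCoboundedUnder_ge hlim
    have hApos' : ∀ i, μ A ≤ 2 * μ (An i) := by
      intro i
      refine (hspec i).2.2.2.2 A ?_ hAmeas ⟨cB, ?_⟩ ?_
      · refine hAB.trans (hB'sub.trans ?_)
        exact Set.compl_subset_compl.2 (Set.subset_iUnion Un i)
      · filter_upwards [hcB] with ω hω hmem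
        exact hω (hAB hmem)
      · refine frequently_transfer (P := fun m => pettisBocce μ (F m) A < δ/24)
          (hσmono i) hσimono ?_ hfreqi
        filter_upwards [eventually_ge_atTop i] with n hn
        have hmem : σi n ∈ Set.range (σn (n+1)) := ⟨n, rfl⟩
        exact hrange i (n+1) (by omega) hmem
    have hgrow : ∀ n : ℕ, (n : ℝ≥0∞) * (μ A / 2) ≤ μ (Un n) := by
      intro n
      induction n with
      | zero => simp
      | succ n ih =>
          have hstep2 : μ A / 2 ≤ μ (An n) := by
            rw [ENNReal.div_le_iff_le_mul (Or.inl (by norm_num)) (Or.inl (by norm_num))]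
            rw [mul_comm]
            exact hApos' n
          have hcast : ((n+1 : ℕ) : ℝ≥0∞) * (μ A / 2) = (n : ℝ≥0∞) * (μ A / 2) + μ A / 2 := by
            rw [Nat.cast_succ, add_mul, one_mul]
          calc ((n+1 : ℕ) : ℝ≥0∞) * (μ A / 2)
              = (n : ℝ≥0∞) * (μ A / 2) + μ A / 2 := hcast
          _ ≤ μ (Un n) + μ (An n) := add_le_add ih hstep2
          _ = μ (Un (n+1)) := (hmeasadd n).symm
    have hfin : ∀ n : ℕ, (n : ℝ) * ((μ A).toReal / 2) ≤ 1 := by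
      intro n
      have hg := (hgrow n).trans prob_le_one
      have h6 : ((n : ℝ≥0∞) * (μ A / 2)).toReal ≤ (1 : ℝ≥0∞).toReal :=
        ENNReal.toReal_mono (by norm_num) hg
      rw [ENNReal.toReal_mul, ENNReal.toReal_div] at h6
      simpa using h6
    have htpos : 0 < (μ A).toReal / 2 := by
      have hh := ENNReal.toReal_pos hApos.ne' (measure_ne_top μ A)
      positivity
    obtain ⟨n, hn⟩ := exists_nat_gt (1 / ((μ A).toReal / 2))
    have h7 : (1:ℝ) < n * ((μ A).toReal / 2) := (div_lt_iff₀ htpos).1 hn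
    have h8 := hfin n
    linarith
  -- choose n with small complement measure
  have hU0 : Un 0 = ∅ := rfl
  have hcompl : ∀ᶠ q in atTop, (μ ((Un q)ᶜ)).toReal ≤ η := by
    have hanti : Antitone fun q => (Un q)ᶜ := fun a b hab => Set.compl_subset_compl.2 (hUmono hab)
    have htendU : Tendsto (fun q => μ ((Un q)ᶜ)) atTop (nhds (μ (⋂ q, (Un q)ᶜ))) :=
      tendsto_measure_iInter_atTop (fun q => (hUmeas q).compl.nullMeasurableSet) hanti
        ⟨0, measure_ne_top _ _⟩
    have hiInter : μ (⋂ q, (Un q)ᶜ) = 0 := by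
      rw [← Set.compl_iUnion]
      exact hnull
    rw [hiInter] at htendU
    have hev := htendU.eventually_lt_const (ENNReal.ofReal_pos.2 hηpos)
    filter_upwards [hev] with q hq
    have := (ENNReal.lt_ofReal_iff_toReal_lt (measure_ne_top _ _)).1 hq
    exact this.le
  obtain ⟨n, hnsmall⟩ := hcompl.exists
  -- piece properties
  have hnear : ∀ i, ∃ cst : E, ∀ᵐ ω ∂μ, ω ∈ An i → ‖f₀ ω - cst‖ ≤ δ/24 :=
    fun i => (hspec i).2.2.1
  have hboc : ∀ i j, i < n → pettisBocce μ (F (σn n j)) (An i) ≤ δ/24 := by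
    intro i j hin
    obtain ⟨m, hm⟩ := hrange (i+1) n hin (⟨j, rfl⟩ : σn n j ∈ Set.range (σn n))
    rw [← hm]
    exact ((hspec i).2.2.2.1 m).le
  -- integral splitting over Un q
  have hUnsum : ∀ (h : Ω → ℝ), Integrable h μ → ∀ q : ℕ,
      ∫ ω in Un q, h ω ∂μ = ∑ i ∈ Finset.range q, ∫ ω in An i, h ω ∂μ := by
    intro h hh q
    induction q with
    | zero => simp [hU0]
    | succ q ih =>
        rw [← hUnion q, setIntegral_union (hdisj q) (hAnmeas q) hh.integrableOn hh.integrableOn,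
          ih, Finset.sum_range_succ]
  have hMsum : ∀ q : ℕ, ∑ i ∈ Finset.range q, (μ (An i)).toReal = (μ (Un q)).toReal := by
    intro q
    induction q with
    | zero => simp [hU0]
    | succ q ih =>
        rw [Finset.sum_range_succ, ih, hmeasadd q,
          ENNReal.toReal_add (measure_ne_top _ _) (measure_ne_top _ _)]
  have hUn1 : (μ (Un n)).toReal ≤ 1 := by
    have hh := prob_le_one (μ := μ) (s := Un n)
    calc (μ (Un n)).toReal ≤ (1 : ℝ≥0∞).toReal := ENNReal.toReal_mono (by norm_num) hh
    _ = 1 := by norm_num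
  have hcη : c * η ≤ δ/8 := by
    have hle' : η ≤ δ/(8*(c+1)) := min_le_right _ _
    calc c * η ≤ c * (δ/(8*(c+1))) := mul_le_mul_of_nonneg_left hle' hcnn
    _ = (c*δ)/(8*(c+1)) := by ring
    _ ≤ δ/8 := by
        rw [div_le_div_iff₀ (by positivity) (by norm_num)]
        nlinarith [hδpos.le, hcnn]
  -- the key estimate
  have hkey : ∀ j, pettisNorm μ (fun ω => F (σn n j) ω - f₀ ω)
      ≤ δ/2 + ∑ i ∈ Finset.range n,
          ‖(∫ ω in An i, F (σn n j) ω ∂μ) - ∫ ω in An i, f₀ ω ∂μ‖ := by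
    intro j
    set m := σn n j with hmdef
    have hgm : Integrable (fun ω => F m ω - f₀ ω) μ := (hF m).sub hf₀
    refine pettisNorm_le_bound fun x' => ?_
    have hxint : Integrable (fun ω => |x'.1 (F m ω - f₀ ω)|) μ :=
      (integrable_dual_comp hgm x'.1).abs
    have hsplit : ∫ ω, |x'.1 (F m ω - f₀ ω)| ∂μ
        = (∫ ω in Un n, |x'.1 (F m ω - f₀ ω)| ∂μ)
          + ∫ ω in (Un n)ᶜ, |x'.1 (F m ω - f₀ ω)| ∂μ :=
      (integral_add_compl (hUmeas n) hxint).symm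
    have hpieces : ∫ ω in Un n, |x'.1 (F m ω - f₀ ω)| ∂μ
        ≤ ∑ i ∈ Finset.range n, (3 * (δ/24) * (μ (An i)).toReal
            + ‖(∫ ω in An i, F m ω ∂μ) - ∫ ω in An i, f₀ ω ∂μ‖) := by
      rw [hUnsum _ hxint n]
      refine Finset.sum_le_sum fun i hi => ?_
      obtain ⟨cst, hcst⟩ := hnear i
      exact piece_bound (hAnmeas i) (hF m) hf₀ hε'pos.le hcst
        (hboc i j (Finset.mem_range.1 hi)) x'
    have hsum1 : ∑ i ∈ Finset.range n, (3 * (δ/24) * (μ (An i)).toReal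
            + ‖(∫ ω in An i, F m ω ∂μ) - ∫ ω in An i, f₀ ω ∂μ‖)
        = 3 * (δ/24) * (μ (Un n)).toReal + ∑ i ∈ Finset.range n,
            ‖(∫ ω in An i, F m ω ∂μ) - ∫ ω in An i, f₀ ω ∂μ‖ := by
      rw [Finset.sum_add_distrib, ← Finset.mul_sum, hMsum n]
    have hrem : ∫ ω in (Un n)ᶜ, |x'.1 (F m ω - f₀ ω)| ∂μ ≤ (c * η + δ/8) + δ/8 := by
      have ht1 : ∫ ω in (Un n)ᶜ, |x'.1 (F m ω - f₀ ω)| ∂μ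
          ≤ (∫ ω in (Un n)ᶜ, |x'.1 (F m ω)| ∂μ) + ∫ ω in (Un n)ᶜ, |x'.1 (f₀ ω)| ∂μ := by
        rw [← integral_add (integrable_dual_comp (hF m) x'.1).abs.integrableOn
          (integrable_dual_comp hf₀ x'.1).abs.integrableOn]
        refine integral_mono hxint.integrableOn
          ((integrable_dual_comp (hF m) x'.1).abs.integrableOn.add
            (integrable_dual_comp hf₀ x'.1).abs.integrableOn) fun ω => ?_
        have he : x'.1 (F m ω - f₀ ω) = x'.1 (F m ω) - x'.1 (f₀ ω) := map_sub _ _ _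
        rw [he]
        exact (abs_sub _ _)
      have ht2 : ∫ ω in (Un n)ᶜ, |x'.1 (F m ω)| ∂μ ≤ c * (μ ((Un n)ᶜ)).toReal + δ/8 :=
        hcc m x'.1 x'.2 _
      have ht3 : c * (μ ((Un n)ᶜ)).toReal ≤ c * η := mul_le_mul_of_nonneg_left hnsmall hcnn
      have ht4 : ∫ ω in (Un n)ᶜ, |x'.1 (f₀ ω)| ∂μ ≤ ∫ ω in (Un n)ᶜ, ‖f₀ ω‖ ∂μ :=
        integral_mono (integrable_dual_comp hf₀ x'.1).abs.integrableOn hf₀.norm.integrableOn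
          fun ω => abs_dual_le x' (f₀ ω)
      have ht5 : ∫ ω in (Un n)ᶜ, ‖f₀ ω‖ ∂μ ≤ δ/8 := hη₀ _ (hnsmall.trans (min_le_left _ _))
      linarith
    have h38 : 3 * (δ/24) * (μ (Un n)).toReal ≤ δ/8 := by
      have h39 : 3 * (δ/24) = δ/8 := by ring
      rw [h39]
      calc δ/8 * (μ (Un n)).toReal ≤ δ/8 * 1 := by
            exact mul_le_mul_of_nonneg_left hUn1 (by positivity)
      _ = δ/8 := mul_one _
    calc ∫ ω, |x'.1 (F m ω - f₀ ω)| ∂μ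
        = (∫ ω in Un n, |x'.1 (F m ω - f₀ ω)| ∂μ)
          + ∫ ω in (Un n)ᶜ, |x'.1 (F m ω - f₀ ω)| ∂μ := hsplit
    _ ≤ (3 * (δ/24) * (μ (Un n)).toReal + ∑ i ∈ Finset.range n,
          ‖(∫ ω in An i, F m ω ∂μ) - ∫ ω in An i, f₀ ω ∂μ‖) + ((c * η + δ/8) + δ/8) :=
        add_le_add (hpieces.trans (le_of_eq hsum1)) hrem
    _ ≤ δ/2 + ∑ i ∈ Finset.range n,
          ‖(∫ ω in An i, F m ω ∂μ) - ∫ ω in An i, f₀ ω ∂μ‖ := by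
        linarith
  -- the averaged terms tend to zero
  have hW : Tendsto (fun j => ∑ i ∈ Finset.range n,
      ‖(∫ ω in An i, F (σn n j) ω ∂μ) - ∫ ω in An i, f₀ ω ∂μ‖) atTop (nhds 0) := by
    have hterm : ∀ i ∈ Finset.range n, Tendsto (fun j =>
        ‖(∫ ω in An i, F (σn n j) ω ∂μ) - ∫ ω in An i, f₀ ω ∂μ‖) atTop (nhds 0) := by
      intro i _
      rcases eq_or_ne (μ (An i)) 0 with hz | hz
      · have hzero : ∀ j, ‖(∫ ω in An i, F (σn n j) ω ∂μ) - ∫ ω in An i, f₀ ω ∂μ‖ = 0 := by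
          intro j
          rw [integral_zero_of_null hz, integral_zero_of_null hz, sub_zero, norm_zero]
        simpa [hzero] using tendsto_const_nhds (x := (0:ℝ)) (f := (atTop : Filter ℕ))
      · have hApos2 : 0 < μ (An i) := pos_iff_ne_zero.2 hz
        have htpos : 0 < (μ (An i)).toReal :=
          ENNReal.toReal_pos hz (measure_ne_top _ _)
        have htt : Tendsto (fun j => ‖avg μ (F (σn n j)) (An i) - avg μ f₀ (An i)‖)
            atTop (nhds 0) :=
          (h3 (An i) (hAnmeas i) hApos2).comp (hσmono n).tendsto_atTop
        have heq : ∀ m', ‖(∫ ω in An i, F m' ω ∂μ) - ∫ ω in An i, f₀ ω ∂μ‖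
            = (μ (An i)).toReal * ‖avg μ (F m') (An i) - avg μ f₀ (An i)‖ := by
          intro m'
          have hsm : (μ (An i)).toReal • (avg μ (F m') (An i) - avg μ f₀ (An i))
              = (∫ ω in An i, F m' ω ∂μ) - ∫ ω in An i, f₀ ω ∂μ := by
            unfold avg
            rw [smul_sub, smul_inv_smul₀ htpos.ne', smul_inv_smul₀ htpos.ne']
          rw [← hsm, norm_smul, Real.norm_eq_abs, abs_of_nonneg htpos.le]
        have htt2 : Tendsto (fun j => (μ (An i)).toReal *
            ‖avg μ (F (σn n j)) (An i) - avg μ f₀ (An i)‖) atTop (nhds 0) := by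
          simpa using htt.const_mul ((μ (An i)).toReal)
        exact htt2.congr fun j => (heq (σn n j)).symm
    have hsum := tendsto_finset_sum (Finset.range n) hterm
    simpa using hsum
  have hfinal : ∀ᶠ j in atTop, pettisNorm μ (fun ω => F (σn n j) ω - f₀ ω) < δ := by
    have hWev := hW.eventually (eventually_lt_nhds (show (0:ℝ) < δ/2 from half_pos hδpos))
    filter_upwards [hWev] with j hj
    have hk := hkey j
    linarith
  obtain ⟨j, hj⟩ := hfinal.exists
  obtain ⟨m0, hm0⟩ := hrange 0 n (Nat.zero_le n) (⟨j, rfl⟩ : σn n j ∈ Set.range (σn n))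
  have hge : δ ≤ pettisNorm μ (fun ω => F (σn n j) ω - f₀ ω) := by
    have hσ0 : σn 0 = k₀ := rfl
    rw [← hm0, hσ0]
    exact hk₀' m0
  linarith

end Reverse

end Aux

theorem pettis_conv_iff {Ω E : Type*} [MeasurableSpace Ω] [NormedAddCommGroup E]
    [NormedSpace ℝ E] [CompleteSpace E] (μ : Measure Ω) [IsProbabilityMeasure μ]
    (f : ℕ → Ω → E) (f₀ : Ω → E) (hf : ∀ k, Integrable (f k) μ) (hf₀ : Integrable f₀ μ) :
    Filter.Tendsto (fun k => pettisNorm μ (fun ω => f k ω - f₀ ω)) Filter.atTop (nhds 0) ↔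
      ((∀ ε : ℝ, 0 < ε → ∃ c : ℝ, ∀ k, ∀ x' : StrongDual ℝ E, ‖x'‖ ≤ 1 →
          ∫ ω in {ω | c ≤ |x' (f k ω)|}, |x' (f k ω)| ∂μ ≤ ε) ∧
        SeqPettisBocceCriterion μ f ∧
        ∀ B : Set Ω, MeasurableSet B → 0 < μ B →
          Filter.Tendsto (fun k => ‖avg μ (f k) B - avg μ f₀ B‖) Filter.atTop (nhds 0)) := by
  constructor
  · intro htend
    exact ⟨fun ε hε => forward_uniform hf hf₀ htend hε, forward_criterion hf hf₀ htend,
      fun B hB hBpos => forward_means hf hf₀ htend hB hBpos⟩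
  · rintro ⟨h1, h2, h3⟩
    exact reverse_dir hf hf₀ h1 h2 h3
end

section
/- Let E = ℓ¹ and f_k(ω) := (1/k) Σ_{i=1}^k r_i(ω) e_i, where r_i are the Rademacher functions on [0,1] and e_i the unit vectors of ℓ¹. Then ‖f_k‖_Pettis → 0, but for b(ω) := (1_{[r_i = 1]}(ω))_i ∈ L^∞(μ, ℓ^∞) one has ∫_0^1 ⟨f_k(ω), b(ω)⟩ dω = 1/2 for all k; hence (f_k) converges to 0 in Pettis norm but not weakly in L¹([0,1], ℓ¹). -/
open MeasureTheory Filter Topology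

/-- The Rademacher functions. -/
noncomputable def rademacher (i : ℕ) (ω : ℝ) : ℝ :=
  Real.sign (Real.sin (2 ^ i * Real.pi * ω))

/-- The standard unit vectors of `ℓ¹`. -/
noncomputable def e1 (i : ℕ) : lp (fun _ : ℕ => ℝ) 1 := lp.single 1 i 1

/-- `f_k(ω) = (1/k) Σ_{i=1}^k r_i(ω) e_i`. -/
noncomputable def fex19 (k : ℕ) : ℝ → lp (fun _ : ℕ => ℝ) 1 := fun ω =>
  (k : ℝ)⁻¹ • ∑ i ∈ Finset.Icc (1 : ℕ) k, rademacher i ω • e1 i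


lemma rademacher_eq_on (n m : ℕ) (ω : ℝ) (h1 : (m : ℝ) / 2 ^ n < ω)
    (h2 : ω < (m + 1) / 2 ^ n) : rademacher n ω = (-1) ^ m := by
  have h2n : (0:ℝ) < 2 ^ n := by positivity
  have hx1 : (m : ℝ) * Real.pi < 2 ^ n * Real.pi * ω := by
    rw [div_lt_iff₀ h2n] at h1
    nlinarith [Real.pi_pos]
  have hx2 : 2 ^ n * Real.pi * ω < ((m : ℝ) + 1) * Real.pi := by
    rw [lt_div_iff₀ h2n] at h2
    nlinarith [Real.pi_pos]
  set x := 2 ^ n * Real.pi * ω with hx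
  have hy1 : 0 < x - m * Real.pi := by linarith
  have hy2 : x - m * Real.pi < Real.pi := by nlinarith
  have hsin : Real.sin x = (-1) ^ m * Real.sin (x - m * Real.pi) := by
    have := Real.sin_add_nat_mul_pi (x - m * Real.pi) m
    rw [← this]; ring_nf
  have hpos : 0 < Real.sin (x - m * Real.pi) := Real.sin_pos_of_pos_of_lt_pi hy1 hy2
  unfold rademacher
  rw [← hx, hsin]
  rcases Nat.even_or_odd m with he | ho
  · rw [he.neg_one_pow]
    simpa using Real.sign_of_pos (by simpa using hpos)
  · rw [ho.neg_one_pow]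
    have : (-1 : ℝ) * Real.sin (x - m * Real.pi) < 0 := by linarith
    simpa using Real.sign_of_neg this

lemma measurable_sign' : Measurable Real.sign := by
  have : Real.sign = fun x : ℝ => if x < 0 then (-1 : ℝ) else if 0 < x then 1 else 0 := by
    funext x; rfl
  rw [this]
  exact Measurable.ite measurableSet_Iio measurable_const
    (Measurable.ite measurableSet_Ioi measurable_const measurable_const)

lemma measurable_rademacher (i : ℕ) : Measurable (rademacher i) :=
  measurable_sign'.comp (Real.continuous_sin.measurable.comp (measurable_const.mul measurable_id))

lemma abs_rademacher_le (i : ℕ) (ω : ℝ) : |rademacher i ω| ≤ 1 := by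
  unfold rademacher
  rcases Real.sign_apply_eq (Real.sin (2 ^ i * Real.pi * ω)) with h | h | h <;> rw [h] <;> norm_num

lemma integral_Ioc_const_of_Ioo {a b c : ℝ} (hab : a ≤ b) {g : ℝ → ℝ}
    (h : ∀ ω ∈ Set.Ioo a b, g ω = c) :
    ∫ ω in Set.Ioc a b, g ω = c * (b - a) := by
  rw [MeasureTheory.integral_Ioc_eq_integral_Ioo,
    setIntegral_congr_fun measurableSet_Ioo h, setIntegral_const, Real.volume_real_Ioo_of_le hab,
    smul_eq_mul]
  ring

lemma integral_dyadic_split (g : ℝ → ℝ) (D : ℝ) (hD : 0 < D) (N : ℕ)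
    (hint : IntegrableOn g (Set.Ioc 0 ((N : ℝ) / D)) volume) :
    ∫ ω in Set.Ioc 0 ((N : ℝ) / D), g ω
      = ∑ m ∈ Finset.range N, ∫ ω in Set.Ioc ((m : ℝ) / D) ((m + 1) / D), g ω := by
  induction N with
  | zero => simp
  | succ N ih =>
    have hsub : Set.Ioc (0 : ℝ) ((N : ℝ) / D) ⊆ Set.Ioc 0 (((N : ℕ) + 1 : ℝ) / D) := by
      apply Set.Ioc_subset_Ioc le_rfl
      gcongr
      linarith
    have hsub2 : Set.Ioc ((N : ℝ) / D) (((N : ℝ) + 1) / D) ⊆ Set.Ioc 0 (((N : ℝ) + 1) / D) :=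
      Set.Ioc_subset_Ioc (by positivity) le_rfl
    have hunion : Set.Ioc (0 : ℝ) ((N : ℝ) / D) ∪ Set.Ioc ((N : ℝ) / D) (((N : ℝ) + 1) / D)
        = Set.Ioc (0 : ℝ) (((N : ℝ) + 1) / D) := by
      apply Set.Ioc_union_Ioc_eq_Ioc (by positivity)
      gcongr
      linarith
    push_cast
    rw [Finset.sum_range_succ, ← ih (hint.mono_set (by push_cast at hsub ⊢; exact hsub)),
      ← setIntegral_union (Set.Ioc_disjoint_Ioc_of_le le_rfl) measurableSet_Ioc
        (hint.mono_set (by push_cast at hsub ⊢; exact hsub))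
        (hint.mono_set (by push_cast at hsub2 ⊢; exact hsub2)), hunion]

lemma integrableOn_bdd {g : ℝ → ℝ} (hm : Measurable g) (C : ℝ) (h : ∀ ω, |g ω| ≤ C)
    {s : Set ℝ} (hs : volume s ≠ ⊤) : IntegrableOn g s volume :=
  Measure.integrableOn_of_bounded hs hm.aestronglyMeasurable
    (Filter.Eventually.of_forall fun ω => by simpa [Real.norm_eq_abs] using h ω)

lemma integral_Icc_dyadic (g : ℝ → ℝ) (hm : Measurable g) (C : ℝ) (h : ∀ ω, |g ω| ≤ C) (n : ℕ) :
    ∫ ω in Set.Icc (0 : ℝ) 1, g ω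
      = ∑ m ∈ Finset.range (2 ^ n), ∫ ω in Set.Ioc ((m : ℝ) / 2 ^ n) ((m + 1) / 2 ^ n), g ω := by
  have h1 : ((2 ^ n : ℕ) : ℝ) / (2 ^ n : ℝ) = 1 := by
    push_cast; field_simp
  rw [MeasureTheory.integral_Icc_eq_integral_Ioc, show Set.Ioc (0:ℝ) 1 = Set.Ioc 0 (((2^n : ℕ) : ℝ) / 2 ^ n) by rw [h1]]
  exact integral_dyadic_split g _ (by positivity) _
    (integrableOn_bdd hm C h (by rw [h1]; simp [Real.volume_Ioc]))

lemma sum_range_two_mul' {M : Type*} [AddCommMonoid M] (f : ℕ → M) (N : ℕ) :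
    ∑ m ∈ Finset.range (2 * N), f m = ∑ t ∈ Finset.range N, (f (2 * t) + f (2 * t + 1)) := by
  induction N with
  | zero => simp
  | succ N ih =>
    rw [Finset.sum_range_succ, ← ih, Nat.mul_succ, Finset.sum_range_succ, Finset.sum_range_succ]
    rw [add_assoc]

lemma rademacher_on_Ioo (j : ℕ) (m : ℕ) (ω : ℝ)
    (hω : ω ∈ Set.Ioo ((m : ℝ) / 2 ^ j) ((m + 1) / 2 ^ j)) : rademacher j ω = (-1) ^ m :=
  rademacher_eq_on j m ω hω.1 hω.2

lemma rademacher_coarse_on_Ioo (i j : ℕ) (hij : i ≤ j) (m : ℕ) (ω : ℝ)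
    (hω : ω ∈ Set.Ioo ((m : ℝ) / 2 ^ j) ((m + 1) / 2 ^ j)) :
    rademacher i ω = (-1) ^ (m / 2 ^ (j - i)) := by
  set b := 2 ^ (j - i) with hb
  have hbpos : 0 < b := Nat.pow_pos (by norm_num)
  have h2j : (2 : ℝ) ^ j = 2 ^ i * (b : ℝ) := by
    rw [hb]; push_cast; rw [← pow_add]; congr 1; omega
  apply rademacher_eq_on
  · calc ((m / b : ℕ) : ℝ) / 2 ^ i = ((m / b : ℕ) : ℝ) * b / 2 ^ j := by
          rw [h2j]; field_simp
    _ ≤ (m : ℝ) / 2 ^ j := by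
          gcongr; exact_mod_cast Nat.div_mul_le_self m b
    _ < ω := hω.1
  · have hm : m + 1 ≤ (m / b + 1) * b := by
      have h1 := Nat.div_add_mod m b
      have h2 := Nat.mod_lt m hbpos
      nlinarith [Nat.div_le_self m b]
    calc ω < ((m : ℝ) + 1) / 2 ^ j := hω.2
    _ ≤ (((m / b : ℕ) : ℝ) + 1) * b / 2 ^ j := by gcongr; exact_mod_cast hm
    _ = (((m / b : ℕ) : ℝ) + 1) / 2 ^ i := by rw [h2j]; field_simp

lemma integral_Icc_eq_sum_const {g : ℝ → ℝ} (hm : Measurable g) (C : ℝ) (h : ∀ ω, |g ω| ≤ C)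
    (n : ℕ) (c : ℕ → ℝ)
    (hc : ∀ m : ℕ, ∀ ω ∈ Set.Ioo ((m : ℝ) / 2 ^ n) ((m + 1) / 2 ^ n), g ω = c m) :
    ∫ ω in Set.Icc (0 : ℝ) 1, g ω = (∑ m ∈ Finset.range (2 ^ n), c m) / 2 ^ n := by
  rw [integral_Icc_dyadic g hm C h n, Finset.sum_div]
  apply Finset.sum_congr rfl
  intro m _
  have h2n : (0 : ℝ) < 2 ^ n := by positivity
  rw [integral_Ioc_const_of_Ioo (by gcongr; linarith) (hc m)]
  field_simp
  ring

lemma integral_rademacher_sq (i : ℕ) :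
    ∫ ω in Set.Icc (0 : ℝ) 1, rademacher i ω * rademacher i ω = 1 := by
  rw [integral_Icc_eq_sum_const (g := fun ω => rademacher i ω * rademacher i ω)
    ((measurable_rademacher i).mul (measurable_rademacher i)) 1
    (fun ω => by have := abs_rademacher_le i ω; have := abs_nonneg (rademacher i ω); rw [abs_mul]; nlinarith)
    i (fun m => 1)
    (fun m ω hω => by rw [rademacher_on_Ioo i m ω hω, ← pow_add]; simp [pow_mul_comm']
      )]
  simp

lemma integral_rademacher_mul {i j : ℕ} (hij : i < j) :
    ∫ ω in Set.Icc (0 : ℝ) 1, rademacher i ω * rademacher j ω = 0 := by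
  rw [integral_Icc_eq_sum_const (g := fun ω => rademacher i ω * rademacher j ω)
    ((measurable_rademacher i).mul (measurable_rademacher j)) 1
    (fun ω => by have h1 := abs_rademacher_le i ω; have h2 := abs_rademacher_le j ω
                 have h3 := abs_nonneg (rademacher i ω); have h4 := abs_nonneg (rademacher j ω)
                 rw [abs_mul]; nlinarith)
    j (fun m => (-1 : ℝ) ^ (m / 2 ^ (j - i)) * (-1) ^ m)
    (fun m ω hω => by rw [rademacher_on_Ioo j m ω hω, rademacher_coarse_on_Ioo i j hij.le m ω hω])]
  have hb : 2 ^ j = 2 * (2 ^ (j - 1)) := by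
    rw [← pow_succ']; congr 1; omega
  rw [hb, sum_range_two_mul']
  have key : ∀ t : ℕ, (-1 : ℝ) ^ (2 * t / 2 ^ (j - i)) * (-1) ^ (2 * t)
      + (-1 : ℝ) ^ ((2 * t + 1) / 2 ^ (j - i)) * (-1) ^ (2 * t + 1) = 0 := by
    intro t
    have hji : j - i = (j - i - 1) + 1 := by omega
    have hdiv : (2 * t + 1) / 2 ^ (j - i) = 2 * t / 2 ^ (j - i) := by
      rw [hji, pow_succ', ← Nat.div_div_eq_div_mul, ← Nat.div_div_eq_div_mul]
      congr 1
      omega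
    rw [hdiv, pow_succ]
    norm_num
  rw [Finset.sum_congr rfl (fun t _ => key t)]
  simp

lemma measurable_rademacher_ind (i : ℕ) :
    Measurable (fun ω => rademacher i ω * (if rademacher i ω = 1 then (1 : ℝ) else 0)) := by
  apply (measurable_rademacher i).mul
  exact Measurable.ite ((measurable_rademacher i) (measurableSet_singleton 1))
    measurable_const measurable_const

lemma abs_rademacher_ind_le (i : ℕ) (ω : ℝ) :
    |rademacher i ω * (if rademacher i ω = 1 then (1 : ℝ) else 0)| ≤ 1 := by
  have h := abs_rademacher_le i ω
  split <;> simp_all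

lemma integral_rademacher_ind (i : ℕ) (hi : 1 ≤ i) :
    ∫ ω in Set.Icc (0 : ℝ) 1,
      rademacher i ω * (if rademacher i ω = 1 then (1 : ℝ) else 0) = 1 / 2 := by
  rw [integral_Icc_eq_sum_const (measurable_rademacher_ind i) 1 (abs_rademacher_ind_le i) i
    (fun m => if Even m then 1 else 0)
    (fun m ω hω => by
      rw [rademacher_on_Ioo i m ω hω]
      rcases Nat.even_or_odd m with he | ho
      · rw [he.neg_one_pow]; simp [he]
      · rw [ho.neg_one_pow]; norm_num [Nat.not_even_iff_odd.mpr ho])]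
  have hb : 2 ^ i = 2 * (2 ^ (i - 1)) := by rw [← pow_succ']; congr 1; omega
  rw [hb, sum_range_two_mul']
  have : ∀ t : ℕ, ((if Even (2 * t) then (1:ℝ) else 0) + (if Even (2 * t + 1) then (1:ℝ) else 0)) = 1 := by
    intro t
    rw [if_pos (even_two_mul t), if_neg (by simp [Nat.even_add_one, Nat.even_mul])]
    norm_num
  rw [Finset.sum_congr rfl (fun t _ => this t), Finset.sum_const]
  simp only [Finset.card_range, nsmul_eq_mul, mul_one]
  have h2 : (2 : ℝ) ^ i = 2 * 2 ^ (i - 1) := by rw [← pow_succ']; congr 1; omega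
  rw [h2]
  have : (0:ℝ) < 2 ^ (i-1) := by positivity
  field_simp
  ring
  norm_num

lemma abs_mul_le_of_le {x y c d : ℝ} (hx : |x| ≤ c) (hy : |y| ≤ d) : |x * y| ≤ c * d := by
  rw [abs_mul]
  exact mul_le_mul hx hy (abs_nonneg _) ((abs_nonneg x).trans hx)

lemma norm_e1 (i : ℕ) : ‖e1 i‖ = 1 := by
  have := lp.norm_single (p := 1) (E := fun _ : ℕ => ℝ) (by norm_num) i (1 : ℝ)
  simpa [e1] using this

section mainbound

variable (μ : Measure ℝ)

lemma integral_abs_pairing_le (k : ℕ) (x' : StrongDual ℝ (lp (fun _ : ℕ => ℝ) 1))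
    (hx' : ‖x'‖ ≤ 1) :
    ∫ ω in Set.Icc (0 : ℝ) 1, |x' (fex19 k ω)| ≤ (k : ℝ)⁻¹ * Real.sqrt k := by
  set μ := (volume : Measure ℝ).restrict (Set.Icc (0 : ℝ) 1) with hμ
  have hμfin : IsFiniteMeasure μ := by
    constructor
    rw [hμ, Measure.restrict_apply_univ, Real.volume_Icc]
    norm_num
  set a : ℕ → ℝ := fun i => x' (e1 i) with ha
  have ha1 : ∀ i, |a i| ≤ 1 := by
    intro i
    calc |a i| = ‖x' (e1 i)‖ := (Real.norm_eq_abs _).symm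
    _ ≤ ‖x'‖ * ‖e1 i‖ := x'.le_opNorm _
    _ ≤ 1 := by rw [norm_e1]; linarith
  set F : ℝ → ℝ := fun ω => ∑ i ∈ Finset.Icc (1 : ℕ) k, rademacher i ω * a i with hF
  have hFmeas : Measurable F :=
    Finset.measurable_sum _ fun i _ => (measurable_rademacher i).mul measurable_const
  have hFbd : ∀ ω, |F ω| ≤ k := by
    intro ω
    calc |F ω| ≤ ∑ i ∈ Finset.Icc (1 : ℕ) k, |rademacher i ω * a i| := Finset.abs_sum_le_sum_abs _ _
    _ ≤ ∑ i ∈ Finset.Icc (1 : ℕ) k, 1 := by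
        apply Finset.sum_le_sum
        intro i _
        rw [abs_mul]
        have h1 := abs_rademacher_le i ω
        have h2 := ha1 i
        nlinarith [abs_nonneg (rademacher i ω), abs_nonneg (a i)]
    _ ≤ k := by simp [Nat.Icc_eq_range']
  have hpair : ∀ ω, x' (fex19 k ω) = (k : ℝ)⁻¹ * F ω := by
    intro ω
    rw [fex19, _root_.map_smul, map_sum, smul_eq_mul]
    congr 1
    apply Finset.sum_congr rfl
    intro i _
    rw [_root_.map_smul, smul_eq_mul, mul_comm]
  -- Cauchy–Schwarz
  have hFint : Integrable F μ := integrableOn_bdd hFmeas k hFbd (by rw [Real.volume_Icc]; norm_num)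
  have hF2int : Integrable (fun ω => F ω * F ω) μ :=
    integrableOn_bdd (g := fun ω => F ω * F ω) (hFmeas.mul hFmeas) ((k : ℝ) * k)
      (fun ω => by rw [abs_mul]; have := hFbd ω; nlinarith [abs_nonneg (F ω)])
      (by rw [Real.volume_Icc]; norm_num)
  have hμuniv : μ Set.univ = 1 := by
    rw [hμ, Measure.restrict_apply_univ, Real.volume_Icc]; norm_num
  have hF2nonneg : (0:ℝ) ≤ ∫ ω, F ω * F ω ∂μ :=
    integral_nonneg fun ω => mul_self_nonneg _
  have hCS : ∫ ω, |F ω| ∂μ ≤ Real.sqrt (∫ ω, F ω * F ω ∂μ) := by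
    have hconj : Real.HolderConjugate 2 2 := ⟨by norm_num, by norm_num, by norm_num⟩
    have hmemF : MemLp (fun ω => |F ω|) (ENNReal.ofReal 2) μ :=
      MemLp.of_bound hFmeas.abs.aestronglyMeasurable (k : ℝ)
        (Filter.Eventually.of_forall fun ω => by
          rw [Real.norm_eq_abs, abs_abs]; exact hFbd ω)
    have hmem1 : MemLp (fun _ : ℝ => (1:ℝ)) (ENNReal.ofReal 2) μ := memLp_const 1
    have hh := integral_mul_le_Lp_mul_Lq_of_nonneg (μ := μ) hconj
      (f := fun ω => |F ω|) (g := fun _ => (1 : ℝ))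
      (Filter.Eventually.of_forall fun ω => abs_nonneg _)
      (Filter.Eventually.of_forall fun ω => zero_le_one)
      hmemF hmem1
    simp only [mul_one, Real.one_rpow] at hh
    rw [integral_const, measureReal_def, hμuniv, smul_eq_mul, ENNReal.toReal_one, one_mul,
      Real.one_rpow, mul_one] at hh
    have heq : ∫ ω, |F ω| ^ (2:ℝ) ∂μ = ∫ ω, F ω * F ω ∂μ := by
      apply integral_congr_ae
      apply Filter.Eventually.of_forall
      intro ω
      show |F ω| ^ (2:ℝ) = F ω * F ω
      rw [show (2:ℝ) = ((2:ℕ):ℝ) from by norm_num, Real.rpow_natCast, pow_two,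
        abs_mul_abs_self]
    rw [heq] at hh
    calc ∫ ω, |F ω| ∂μ ≤ (∫ ω, F ω * F ω ∂μ) ^ ((1:ℝ)/2) := hh
    _ = Real.sqrt (∫ ω, F ω * F ω ∂μ) := by
        rw [Real.sqrt_eq_rpow]
  -- orthonormal expansion
  have hortho : ∀ i j : ℕ, 1 ≤ i → 1 ≤ j →
      ∫ ω, (rademacher i ω * a i) * (rademacher j ω * a j) ∂μ
        = if i = j then a i * a j else 0 := by
    intro i j _ _
    have : ∀ ω, (rademacher i ω * a i) * (rademacher j ω * a j)
        = (a i * a j) * (rademacher i ω * rademacher j ω) := fun ω => by ring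
    rw [integral_congr_ae (Filter.Eventually.of_forall this), integral_const_mul]
    rcases lt_trichotomy i j with h | h | h
    · rw [if_neg h.ne, hμ, integral_rademacher_mul h, mul_zero]
    · rw [if_pos h, h, hμ, integral_rademacher_sq, mul_one]
    · rw [if_neg h.ne', hμ]
      have : ∀ ω, rademacher i ω * rademacher j ω = rademacher j ω * rademacher i ω :=
        fun ω => mul_comm _ _
      rw [integral_congr_ae (Filter.Eventually.of_forall this), integral_rademacher_mul h,
        mul_zero]
  have hexp : ∫ ω, F ω * F ω ∂μ = ∑ i ∈ Finset.Icc (1:ℕ) k, a i * a i := by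
    have hFF : ∀ ω, F ω * F ω = ∑ i ∈ Finset.Icc (1:ℕ) k,
        ((rademacher i ω * a i) * F ω) := fun ω => by
      rw [hF, Finset.sum_mul]
    rw [integral_congr_ae (Filter.Eventually.of_forall hFF), integral_finset_sum _
      (fun i _ => integrableOn_bdd (g := fun ω => (rademacher i ω * a i) * F ω) (((measurable_rademacher i).mul measurable_const).mul hFmeas)
        ((1 * 1) * (k:ℝ))
        (fun ω => abs_mul_le_of_le (abs_mul_le_of_le (abs_rademacher_le i ω) (ha1 i)) (hFbd ω))
        (by rw [Real.volume_Icc]; norm_num))]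
    apply Finset.sum_congr rfl
    intro i hi
    have hFj : ∀ ω, (rademacher i ω * a i) * F ω = ∑ j ∈ Finset.Icc (1:ℕ) k,
        ((rademacher i ω * a i) * (rademacher j ω * a j)) := fun ω => by
      rw [hF, Finset.mul_sum]
    rw [integral_congr_ae (Filter.Eventually.of_forall hFj), integral_finset_sum _
      (fun j _ => integrableOn_bdd (g := fun ω => (rademacher i ω * a i) * (rademacher j ω * a j))
        (((measurable_rademacher i).mul measurable_const).mul
          ((measurable_rademacher j).mul measurable_const))
        ((1 * 1) * (1 * 1))
        (fun ω => abs_mul_le_of_le (abs_mul_le_of_le (abs_rademacher_le i ω) (ha1 i))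
          (abs_mul_le_of_le (abs_rademacher_le j ω) (ha1 j)))
        (by rw [Real.volume_Icc]; norm_num))]
    rw [Finset.sum_congr rfl (fun j hj => hortho i j (Finset.mem_Icc.mp hi).1 (Finset.mem_Icc.mp hj).1)]
    rw [Finset.sum_ite_eq (Finset.Icc (1:ℕ) k) i (fun j => a i * a j), if_pos hi]
  have hsum_le : ∑ i ∈ Finset.Icc (1:ℕ) k, a i * a i ≤ (k : ℝ) := by
    calc ∑ i ∈ Finset.Icc (1:ℕ) k, a i * a i ≤ ∑ i ∈ Finset.Icc (1:ℕ) k, 1 := by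
          apply Finset.sum_le_sum
          intro i _
          have := ha1 i
          nlinarith [abs_nonneg (a i), neg_abs_le (a i), le_abs_self (a i)]
    _ ≤ k := by simp [Nat.Icc_eq_range']
  -- conclude
  have habs : ∀ ω, |x' (fex19 k ω)| = (k:ℝ)⁻¹ * |F ω| := by
    intro ω
    rw [hpair ω, abs_mul, abs_of_nonneg (by positivity : (0:ℝ) ≤ (k:ℝ)⁻¹)]
  calc ∫ ω, |x' (fex19 k ω)| ∂μ = (k:ℝ)⁻¹ * ∫ ω, |F ω| ∂μ := by
        rw [integral_congr_ae (Filter.Eventually.of_forall habs), integral_const_mul]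
  _ ≤ (k:ℝ)⁻¹ * Real.sqrt (∫ ω, F ω * F ω ∂μ) := by
        have : (0:ℝ) ≤ (k:ℝ)⁻¹ := by positivity
        nlinarith [hCS, Real.sqrt_nonneg (∫ ω, F ω * F ω ∂μ),
          integral_nonneg (μ := μ) (f := fun ω => |F ω|) (fun ω => abs_nonneg (F ω))]
  _ ≤ (k:ℝ)⁻¹ * Real.sqrt k := by
        gcongr
        rw [hexp]
        exact hsum_le

end mainbound

lemma part2 (k : ℕ) (hk : 1 ≤ k) :
    (∫ ω in Set.Icc (0 : ℝ) 1,
        (k : ℝ)⁻¹ * ∑ i ∈ Finset.Icc (1 : ℕ) k,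
          rademacher i ω * (if rademacher i ω = 1 then (1 : ℝ) else 0)) = 1 / 2 := by
  rw [integral_const_mul, integral_finset_sum _ (fun i _ =>
    integrableOn_bdd (measurable_rademacher_ind i) 1 (abs_rademacher_ind_le i)
      (by rw [Real.volume_Icc]; norm_num))]
  rw [Finset.sum_congr rfl (fun i hi => integral_rademacher_ind i (Finset.mem_Icc.mp hi).1)]
  rw [Finset.sum_const, Nat.card_Icc]
  simp only [Nat.add_sub_cancel, nsmul_eq_mul]
  have hk0 : (k : ℝ) ≠ 0 := by positivity
  field_simp

theorem pettis_not_weak :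
    Filter.Tendsto
      (fun k => pettisNorm ((volume : Measure ℝ).restrict (Set.Icc 0 1)) (fex19 k))
      Filter.atTop (nhds 0) ∧
    -- pairing with `b(ω) = (1_{[r_i = 1]}(ω))_i ∈ L^∞(μ, ℓ^∞)` is identically one half,
    -- so `(f_k)` does not converge weakly (nor limitedly) to the null function
    (∀ k : ℕ, 1 ≤ k →
      (∫ ω in Set.Icc (0 : ℝ) 1,
        (k : ℝ)⁻¹ * ∑ i ∈ Finset.Icc (1 : ℕ) k,
          rademacher i ω * (if rademacher i ω = 1 then (1 : ℝ) else 0)) = 1 / 2) ∧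
    ¬ Filter.Tendsto
      (fun k : ℕ => ∫ ω in Set.Icc (0 : ℝ) 1,
        (k : ℝ)⁻¹ * ∑ i ∈ Finset.Icc (1 : ℕ) k,
          rademacher i ω * (if rademacher i ω = 1 then (1 : ℝ) else 0))
      Filter.atTop (nhds 0) := by
  refine ⟨?_, part2, ?_⟩
  · -- Pettis norm tends to zero
    have hnonneg : ∀ k : ℕ, 0 ≤ pettisNorm ((volume : Measure ℝ).restrict (Set.Icc 0 1))
        (fex19 k) := by
      intro k
      apply Real.iSup_nonneg
      intro x'
      exact integral_nonneg fun ω => abs_nonneg _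
    have hle : ∀ k : ℕ, 1 ≤ k → pettisNorm ((volume : Measure ℝ).restrict (Set.Icc 0 1))
        (fex19 k) ≤ Real.sqrt ((k : ℝ)⁻¹) := by
      intro k hk
      have heq : (k : ℝ)⁻¹ * Real.sqrt k = Real.sqrt ((k : ℝ)⁻¹) := by
        rw [Real.sqrt_inv]
        have hkpos : (0:ℝ) < k := by exact_mod_cast hk
        have hs : Real.sqrt k * Real.sqrt k = k := Real.mul_self_sqrt hkpos.le
        have hspos : 0 < Real.sqrt k := Real.sqrt_pos.mpr hkpos
        field_simp
        exact Real.sq_sqrt hkpos.le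
      haveI : Nonempty {x' : StrongDual ℝ (lp (fun _ : ℕ => ℝ) 1) // ‖x'‖ ≤ 1} :=
        ⟨⟨0, by simp⟩⟩
      apply ciSup_le
      intro x'
      rw [← heq]
      exact integral_abs_pairing_le k x'.1 x'.2
    have hsq : Filter.Tendsto (fun k : ℕ => Real.sqrt ((k : ℝ)⁻¹)) atTop (nhds 0) := by
      have h1 : Filter.Tendsto (fun k : ℕ => ((k : ℝ))⁻¹) atTop (nhds 0) :=
        tendsto_inv_atTop_nhds_zero_nat
      have h2 := (Real.continuous_sqrt.tendsto 0).comp h1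
      have h3 : ((fun x => Real.sqrt x) ∘ fun k : ℕ => ((k:ℝ))⁻¹)
          = fun k : ℕ => Real.sqrt ((k : ℝ)⁻¹) := rfl
      rw [h3] at h2
      simpa using h2
    exact tendsto_of_tendsto_of_tendsto_of_le_of_le' tendsto_const_nhds hsq
      (Filter.Eventually.of_forall hnonneg) (Filter.eventually_atTop.mpr ⟨1, hle⟩)
  · -- not tendsto 0
    intro h
    have h2 : Filter.Tendsto
        (fun _ : ℕ => (1 : ℝ) / 2) Filter.atTop (nhds 0) := by
      apply h.congr'
      filter_upwards [Filter.eventually_atTop.mpr ⟨1, fun k hk => part2 k hk⟩] with k hk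
      exact hk
    have := tendsto_nhds_unique h2 tendsto_const_nhds
    norm_num at this
end
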